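/- arXiv:1112.2406 — 3 statements merged into one kernel-verified Lean document; each statement's English description precedes it below -/
import Mathlib

section
/- A pair (S*, γ*) ∈ [S̲, S̄] × Y is a saddle point of the relaxed utility function Ψ̂, i.e. Ψ̂(S*, γ) ≤ Ψ̂(S*, γ*) ≤ Ψ̂(S, γ*) for all (S, γ) ∈ [S̲, S̄] × Y, if and only if γ* is an optimal solution of the utility maximization problem under transaction costs (Φ(X_T(γ*)) = λ) and S* is a generalized shadow price. -/
open MeasureTheory Filter Set Topology
open scoped ENNReal

noncomputable section

namespace Shadow

variable {Ω : Type*}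

/-- strategy extended by the conventions `γ₋₁ = 0`, `γ_t = 0` for `t ≥ T`. -/
def extStrat (T : ℕ) (γ : ℕ → Ω → ℝ) : ℤ → Ω → ℝ := fun t =>
  if 0 ≤ t ∧ t < (T : ℤ) then γ t.toNat else 0

/-- `Δγ_t = γ_t − γ_{t−1}` with the conventions `γ₋₁ = 0`, `γ_T = 0`. -/
def dGamma (T : ℕ) (γ : ℕ → Ω → ℝ) (t : ℕ) (ω : Ω) : ℝ :=
  extStrat T γ (t : ℤ) ω - extStrat T γ ((t : ℤ) - 1) ω

/-- terminal wealth `X_T(γ)` under transaction costs. -/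
def XT (T : ℕ) (Sl Su : ℕ → Ω → ℝ) (γ : ℕ → Ω → ℝ) (ω : Ω) : ℝ :=
  1 + ∑ t ∈ Finset.range (T + 1),
      (Sl t ω * max (-dGamma T γ t ω) 0 - Su t ω * max (dGamma T γ t ω) 0)

/-- frictionless terminal wealth `1 + (γ ∘ S)_T`. -/
def FW (T : ℕ) (S : ℕ → Ω → ℝ) (γ : ℕ → Ω → ℝ) (ω : Ω) : ℝ :=
  1 + ∑ t ∈ Finset.range T, γ t ω * (S (t + 1) ω - S t ω)

/-- the lower semicontinuous envelope of `f` on `𝒳` with respect to the topology `τ`: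
the largest function which is lsc on `𝒳` and majorized by `f` on `𝒳`. -/
def lscEnvOn {α : Type*} (τ : TopologicalSpace α) (𝒳 : Set α) (f : α → EReal) : α → EReal :=
  fun x => ⨆ g ∈ {g : α → EReal |
      @LowerSemicontinuousOn α EReal τ _ g 𝒳 ∧ ∀ y ∈ 𝒳, g y ≤ f y}, g x

variable [MeasurableSpace Ω]

/-- the weak topology `σ(L^q, L^p)`, pulled back to functions: the coarsest topology making
all pairings with `L^p` test functions continuous. -/
def weakTop (P : Measure Ω) (p : ℝ≥0∞) : TopologicalSpace (Ω → ℝ) :=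
  ⨅ g ∈ {g : Ω → ℝ | MemLp g p P},
    TopologicalSpace.induced (fun S : Ω → ℝ => ∫ ω, S ω * g ω ∂P) inferInstance

/-- product of weak topologies over time, on price processes. -/
def weakTopProc (P : Measure Ω) (p : ℝ≥0∞) : TopologicalSpace (ℕ → Ω → ℝ) :=
  ⨅ t : ℕ, TopologicalSpace.induced (fun S : ℕ → Ω → ℝ => S t) (weakTop P p)

/-- the metric of convergence in probability. -/
def rhoDist (P : Measure Ω) (f g : Ω → ℝ) : ℝ :=
  ∫ ω, |f ω - g ω| / (1 + |f ω - g ω|) ∂P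

/-- topology of convergence in probability. -/
def probTop (P : Measure Ω) : TopologicalSpace (Ω → ℝ) :=
  TopologicalSpace.generateFrom
    {s | ∃ f : Ω → ℝ, ∃ ε : ℝ, 0 < ε ∧ s = {h | rhoDist P f h < ε}}

/-- the product over time of the topologies of convergence in probability. -/
def probTopProc (P : Measure Ω) : TopologicalSpace (ℕ → Ω → ℝ) :=
  ⨅ t : ℕ, TopologicalSpace.induced (fun γ : ℕ → Ω → ℝ => γ t) (probTop P)

/-- the bid–ask interval `[S̲, S̄]` of adapted price processes. -/
def priceInterval (F : ℕ → MeasurableSpace Ω) (P : Measure Ω) (Sl Su : ℕ → Ω → ℝ) :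
    Set (ℕ → Ω → ℝ) :=
  {S | ∀ t, Measurable[F t] (S t) ∧ ∀ᵐ ω ∂P, Sl t ω ≤ S t ω ∧ S t ω ≤ Su t ω}

/-- `Ψ(S, γ) = Φ(1 + (γ∘S)_T)`. -/
def Psi (T : ℕ) (Φ : (Ω → ℝ) → EReal) (S γ : ℕ → Ω → ℝ) : EReal := Φ (FW T S γ)

/-- `Ψ̂(·, γ)`: the `τ^w`-lower semicontinuous envelope of `Ψ(·, γ)` on `[S̲, S̄]`. -/
def PsiHat (P : Measure Ω) (p : ℝ≥0∞) (F : ℕ → MeasurableSpace Ω)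
    (Sl Su : ℕ → Ω → ℝ) (T : ℕ) (Φ : (Ω → ℝ) → EReal) (γ : ℕ → Ω → ℝ) :
    (ℕ → Ω → ℝ) → EReal :=
  lscEnvOn (weakTopProc P p) (priceInterval F P Sl Su) (fun S => Psi T Φ S γ)

end Shadow
open Shadow MeasureTheory
open scoped ENNReal

section Aux

variable {Ω : Type*} [MeasurableSpace Ω]

/-- the envelope is below the function on the set. -/
lemma lscEnvOn_le {α : Type*} (τ : TopologicalSpace α) (𝒳 : Set α) (f : α → EReal)
    {x : α} (hx : x ∈ 𝒳) : lscEnvOn τ 𝒳 f x ≤ f x :=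
  iSup₂_le fun _g hg => hg.2 x hx

/-- any constant lower bound of `f` on `𝒳` is a lower bound of the envelope (everywhere). -/
lemma le_lscEnvOn {α : Type*} (τ : TopologicalSpace α) (𝒳 : Set α) (f : α → EReal)
    {c : EReal} (hc : ∀ y ∈ 𝒳, c ≤ f y) (x : α) : c ≤ lscEnvOn τ 𝒳 f x := by
  have hmem : (fun _ : α => c) ∈ {g : α → EReal |
      @LowerSemicontinuousOn α EReal τ _ g 𝒳 ∧ ∀ y ∈ 𝒳, g y ≤ f y} :=
    ⟨by letI := τ; exact lowerSemicontinuousOn_const, hc⟩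
  exact le_iSup₂_of_le (fun _ : α => c) hmem le_rfl

lemma dGamma_eq (T : ℕ) (γ : ℕ → Ω → ℝ) (ω : Ω) (t : ℕ) :
    dGamma T γ t ω = (if t < T then γ t ω else 0)
      - (if t = 0 then 0 else if t - 1 < T then γ (t - 1) ω else 0) := by
  unfold dGamma extStrat
  rcases t with _ | k
  · norm_num
    split_ifs <;> rfl
  · have h1 : ((k + 1 : ℕ) : ℤ).toNat = k + 1 := by omega
    have h2 : (((k + 1 : ℕ) : ℤ) - 1).toNat = k := by omega
    have h3 : (0 : ℤ) ≤ ((k + 1 : ℕ) : ℤ) := by positivity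
    have h4 : (0 : ℤ) ≤ ((k + 1 : ℕ) : ℤ) - 1 := by omega
    have h5 : (((k + 1 : ℕ) : ℤ) < (T : ℤ)) ↔ (k + 1 < T) := by omega
    have h6 : ((((k + 1 : ℕ) : ℤ) - 1) < (T : ℤ)) ↔ (k < T) := by omega
    simp only [h1, h2, h3, h5, h6, h4, true_and, Nat.add_sub_cancel,
      Nat.succ_ne_zero, if_false]
    split_ifs <;> rfl

/-- Abel summation: the frictionless wealth as a sum over price–times–trade increments. -/
lemma FW_eq_sub (T : ℕ) (S : ℕ → Ω → ℝ) (γ : ℕ → Ω → ℝ) (ω : Ω) :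
    FW T S γ ω = 1 - ∑ t ∈ Finset.range (T + 1), S t ω * dGamma T γ t ω := by
  have key : ∑ t ∈ Finset.range (T + 1), S t ω * dGamma T γ t ω
      = - ∑ t ∈ Finset.range T, γ t ω * (S (t + 1) ω - S t ω) := by
    have h1 : ∑ t ∈ Finset.range (T + 1), S t ω * dGamma T γ t ω
        = ∑ t ∈ Finset.range (T + 1), S t ω * (if t < T then γ t ω else 0)
          - ∑ t ∈ Finset.range (T + 1),
              S t ω * (if t = 0 then 0 else if t - 1 < T then γ (t - 1) ω else 0) := by
      rw [← Finset.sum_sub_distrib]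
      refine Finset.sum_congr rfl fun t _ => ?_
      rw [dGamma_eq]; ring
    have h2 : ∑ t ∈ Finset.range (T + 1), S t ω * (if t < T then γ t ω else 0)
        = ∑ t ∈ Finset.range T, S t ω * γ t ω := by
      rw [Finset.sum_range_succ, if_neg (lt_irrefl T)]
      simp only [mul_zero, add_zero]
      exact Finset.sum_congr rfl fun t ht =>
        by rw [if_pos (Finset.mem_range.mp ht)]
    have h3 : ∑ t ∈ Finset.range (T + 1),
        S t ω * (if t = 0 then 0 else if t - 1 < T then γ (t - 1) ω else 0)
        = ∑ t ∈ Finset.range T, S (t + 1) ω * γ t ω := by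
      rw [Finset.sum_range_succ']
      have hz : S 0 ω * (if (0:ℕ) = 0 then (0:ℝ) else if 0 - 1 < T then γ (0-1) ω else 0)
          = 0 := by simp
      rw [hz, add_zero]
      refine Finset.sum_congr rfl fun t ht => ?_
      rw [if_neg (Nat.succ_ne_zero t)]
      simp only [Nat.add_sub_cancel]
      rw [if_pos (Finset.mem_range.mp ht)]
    rw [h1, h2, h3, ← Finset.sum_sub_distrib, ← Finset.sum_neg_distrib]
    exact Finset.sum_congr rfl fun t _ => by ring
  unfold FW
  rw [key]; ring

/-- the transaction-cost wealth is dominated by the frictionless wealth for prices in the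
bid–ask spread. -/
lemma XT_le_FW (T : ℕ) (Sl Su S γ : ℕ → Ω → ℝ) (ω : Ω)
    (h : ∀ t, Sl t ω ≤ S t ω ∧ S t ω ≤ Su t ω) :
    XT T Sl Su γ ω ≤ FW T S γ ω := by
  rw [FW_eq_sub]
  unfold XT
  rw [sub_eq_add_neg, ← Finset.sum_neg_distrib]
  refine add_le_add_right (Finset.sum_le_sum fun t _ => ?_) 1
  set d := dGamma T γ t ω with hd
  have hmax : max d 0 - max (-d) 0 = d := max_zero_sub_eq_self d
  have ha : (0:ℝ) ≤ max (-d) 0 := le_max_right _ _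
  have hb : (0:ℝ) ≤ max d 0 := le_max_right _ _
  have h1 := (h t).1
  have h2 := (h t).2
  have hsd : S t ω * d = S t ω * max d 0 - S t ω * max (-d) 0 := by
    linear_combination (-(S t ω)) * hmax
  nlinarith [mul_le_mul_of_nonneg_right h1 ha, mul_le_mul_of_nonneg_right h2 hb, hsd]

/-- the price system matching the bid–ask executed prices of a strategy. -/
def shatP (T : ℕ) (Sl Su γ : ℕ → Ω → ℝ) : ℕ → Ω → ℝ :=
  fun t ω => if 0 < dGamma T γ t ω then Su t ω else Sl t ω

lemma FW_shatP (T : ℕ) (Sl Su γ : ℕ → Ω → ℝ) (ω : Ω) :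
    FW T (shatP T Sl Su γ) γ ω = XT T Sl Su γ ω := by
  rw [FW_eq_sub]
  unfold XT
  rw [sub_eq_add_neg, ← Finset.sum_neg_distrib]
  refine congrArg (1 + ·) (Finset.sum_congr rfl fun t _ => ?_).symm
  set d := dGamma T γ t ω with hd
  unfold shatP
  rw [← hd]
  by_cases hdp : 0 < d
  · rw [if_pos hdp, max_eq_left hdp.le, max_eq_right (by linarith : -d ≤ 0)]
    ring
  · push_neg at hdp
    rw [if_neg (not_lt.mpr hdp), max_eq_right hdp, max_eq_left (by linarith : 0 ≤ -d)]
    ring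

lemma dGamma_meas (T : ℕ) (F : ℕ → MeasurableSpace Ω) (hF : Monotone F)
    (γ : ℕ → Ω → ℝ) (hγ : ∀ t, Measurable[F t] (γ t)) (t : ℕ) :
    Measurable[F t] (dGamma T γ t) := by
  have h1 : Measurable[F t] (fun ω => extStrat T γ (t : ℤ) ω) := by
    unfold extStrat
    by_cases h : (0 : ℤ) ≤ (t : ℤ) ∧ (t : ℤ) < (T : ℤ)
    · simp only [if_pos h]
      have : ((t : ℤ)).toNat = t := by omega
      rw [this]; exact hγ t
    · simp only [if_neg h]; exact measurable_const
  have h2 : Measurable[F t] (fun ω => extStrat T γ ((t : ℤ) - 1) ω) := by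
    unfold extStrat
    by_cases h : (0 : ℤ) ≤ (t : ℤ) - 1 ∧ (t : ℤ) - 1 < (T : ℤ)
    · simp only [if_pos h]
      have ht1 : ((t : ℤ) - 1).toNat = t - 1 := by omega
      rw [ht1]
      exact (hγ (t - 1)).mono (hF (Nat.sub_le t 1)) le_rfl
    · simp only [if_neg h]; exact measurable_const
  exact h1.sub h2

lemma shatP_mem (P : Measure Ω) (T : ℕ) (F : ℕ → MeasurableSpace Ω) (hF : Monotone F)
    (Sl Su : ℕ → Ω → ℝ)
    (hSl_meas : ∀ t, Measurable[F t] (Sl t)) (hSu_meas : ∀ t, Measurable[F t] (Su t))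
    (hS_ord : ∀ t, ∀ᵐ ω ∂P, 0 < Sl t ω ∧ Sl t ω ≤ Su t ω)
    (γ : ℕ → Ω → ℝ) (hγ : ∀ t, Measurable[F t] (γ t)) :
    shatP T Sl Su γ ∈ priceInterval F P Sl Su := by
  intro t
  constructor
  · have hd : Measurable[F t] (dGamma T γ t) := dGamma_meas T F hF γ hγ t
    exact Measurable.ite (measurableSet_lt measurable_const hd) (hSu_meas t) (hSl_meas t)
  · filter_upwards [hS_ord t] with ω hω
    unfold shatP
    by_cases h : 0 < dGamma T γ t ω
    · rw [if_pos h]; exact ⟨hω.2, le_refl _⟩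
    · rw [if_neg h]; exact ⟨le_refl _, hω.2⟩

end Aux

/-- **Theorem 3.** `(S⋆, γ⋆)` is a saddle point of the relaxed utility `Ψ̂` iff `γ⋆` is an
optimal solution of the utility maximization problem under transaction costs and `S⋆` is a
generalized shadow price. -/
theorem statement2
    {Ω : Type*} [MeasurableSpace Ω] (P : Measure Ω) [IsProbabilityMeasure P]
    (T : ℕ) (F : ℕ → MeasurableSpace Ω)
    (hF_mono : Monotone F) (hF_le : ∀ t, F t ≤ ‹MeasurableSpace Ω›)
    (q p : ℝ≥0∞) (hq : 1 ≤ q) (hpq : 1 / p + 1 / q = 1)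
    (Sl Su : ℕ → Ω → ℝ)
    (hSl_meas : ∀ t, Measurable[F t] (Sl t)) (hSu_meas : ∀ t, Measurable[F t] (Su t))
    (hS_ord : ∀ t, ∀ᵐ ω ∂P, 0 < Sl t ω ∧ Sl t ω ≤ Su t ω)
    (hSl_Lq : ∀ t, MemLp (Sl t) q P) (hSu_Lq : ∀ t, MemLp (Su t) q P)
    (s : ℝ≥0∞) (hs : s = 0 ∨ s = ∞)
    (𝒴 : Set (ℕ → Ω → ℝ)) (h𝒴conv : Convex ℝ 𝒴)
    (h𝒴ad : ∀ γ ∈ 𝒴, ∀ t, Measurable[F t] (γ t) ∧ MemLp (γ t) s P)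
    (Φ : (Ω → ℝ) → EReal)
    (hΦmono : ∀ X Y : Ω → ℝ, (∀ᵐ ω ∂P, X ω ≤ Y ω) → Φ X ≤ Φ Y)
    (hΦqc : ∀ X Y : Ω → ℝ, ∀ a b : ℝ, 0 ≤ a → 0 ≤ b → a + b = 1 →
      min (Φ X) (Φ Y) ≤ Φ (fun ω => a * X ω + b * Y ω))
    (Sstar : ℕ → Ω → ℝ) (hSstar : Sstar ∈ priceInterval F P Sl Su)
    (γstar : ℕ → Ω → ℝ) (hγstar : γstar ∈ 𝒴) :
    ((∀ γ ∈ 𝒴, PsiHat P p F Sl Su T Φ γ Sstar ≤ PsiHat P p F Sl Su T Φ γstar Sstar) ∧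
      (∀ S ∈ priceInterval F P Sl Su,
        PsiHat P p F Sl Su T Φ γstar Sstar ≤ PsiHat P p F Sl Su T Φ γstar S))
    ↔ (Φ (XT T Sl Su γstar) = (⨆ γ ∈ 𝒴, Φ (XT T Sl Su γ)) ∧
        (⨆ γ ∈ 𝒴, PsiHat P p F Sl Su T Φ γ Sstar) = ⨆ γ ∈ 𝒴, Φ (XT T Sl Su γ)) := by
  -- Key fact 1: for every strategy `γ` and every `S`, `Φ(X_T(γ)) ≤ Ψ̂(S, γ)`.
  have hK1 : ∀ γ : ℕ → Ω → ℝ, ∀ S : ℕ → Ω → ℝ,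
      Φ (XT T Sl Su γ) ≤ PsiHat P p F Sl Su T Φ γ S := by
    intro γ S
    refine le_lscEnvOn _ _ _ (fun S' hS' => ?_) S
    refine hΦmono _ _ ?_
    have hae : ∀ᵐ ω ∂P, ∀ t : ℕ, Sl t ω ≤ S' t ω ∧ S' t ω ≤ Su t ω :=
      (MeasureTheory.ae_all_iff).mpr fun t => (hS' t).2
    filter_upwards [hae] with ω hω
    exact XT_le_FW T Sl Su S' γ ω hω
  -- Key fact 2: for adapted `γ⋆`, there is a price system in `[S̲, S̄]` with
  -- `Ψ̂(Ŝ, γ⋆) ≤ Φ(X_T(γ⋆))`.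
  have hγstar_meas : ∀ t, Measurable[F t] (γstar t) := fun t => (h𝒴ad γstar hγstar t).1
  have hShat_mem : shatP T Sl Su γstar ∈ priceInterval F P Sl Su :=
    shatP_mem P T F hF_mono Sl Su hSl_meas hSu_meas hS_ord γstar hγstar_meas
  have hK2 : PsiHat P p F Sl Su T Φ γstar (shatP T Sl Su γstar) ≤ Φ (XT T Sl Su γstar) := by
    have h := lscEnvOn_le (weakTopProc P p) (priceInterval F P Sl Su)
      (fun S => Psi T Φ S γstar) hShat_mem
    refine le_trans h (le_of_eq ?_)
    unfold Psi
    exact congrArg Φ (funext fun ω => FW_shatP T Sl Su γstar ω)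
  -- abbreviations
  set lam : EReal := ⨆ γ ∈ 𝒴, Φ (XT T Sl Su γ) with hlam
  have hle_lam : Φ (XT T Sl Su γstar) ≤ lam :=
    le_iSup₂_of_le γstar hγstar le_rfl
  constructor
  · rintro ⟨ha, hb⟩
    -- from (b) at Ŝ and K2: Ψ̂(S⋆, γ⋆) ≤ Φ(X_T(γ⋆))
    have h1 : PsiHat P p F Sl Su T Φ γstar Sstar ≤ Φ (XT T Sl Su γstar) :=
      le_trans (hb _ hShat_mem) hK2
    -- sup over 𝒴 of Ψ̂(S⋆, ·) dominates lam
    have h2 : lam ≤ ⨆ γ ∈ 𝒴, PsiHat P p F Sl Su T Φ γ Sstar := by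
      refine iSup₂_le fun γ hγ => le_iSup₂_of_le γ hγ (hK1 γ Sstar)
    have h3 : (⨆ γ ∈ 𝒴, PsiHat P p F Sl Su T Φ γ Sstar)
        ≤ PsiHat P p F Sl Su T Φ γstar Sstar := iSup₂_le ha
    have h4 : lam ≤ Φ (XT T Sl Su γstar) := le_trans h2 (le_trans h3 h1)
    refine ⟨le_antisymm hle_lam h4, le_antisymm ?_ h2⟩
    exact le_trans h3 (le_trans h1 hle_lam)
  · rintro ⟨hopt, hsup⟩
    constructor
    · intro γ hγ
      have h1 : PsiHat P p F Sl Su T Φ γ Sstar ≤ lam := by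
        rw [← hsup]; exact le_iSup₂_of_le γ hγ le_rfl
      calc PsiHat P p F Sl Su T Φ γ Sstar ≤ lam := h1
        _ = Φ (XT T Sl Su γstar) := hopt.symm
        _ ≤ PsiHat P p F Sl Su T Φ γstar Sstar := hK1 γstar Sstar
    · intro S hS
      have h1 : PsiHat P p F Sl Su T Φ γstar Sstar ≤ lam := by
        rw [← hsup]; exact le_iSup₂_of_le γstar hγstar le_rfl
      calc PsiHat P p F Sl Su T Φ γstar Sstar ≤ lam := h1
        _ = Φ (XT T Sl Su γstar) := hopt.symm
        _ ≤ PsiHat P p F Sl Su T Φ γstar S := hK1 γstar S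
end
end

section
/- Let B̂(γ) = ∏_{t=0}^T ( {S̲_t}·1_{{Δγ_t<0}} + {S̄_t}·1_{{Δγ_t>0}} + [S̲_t, S̄_t]·1_{{Δγ_t=0}} ), i.e. B̂(γ) consists of those S ∈ [S̲, S̄] with S_t = S̲_t a.s. on {Δγ_t < 0} and S_t = S̄_t a.s. on {Δγ_t > 0} for all t, and let B = {(S, γ) ∈ [S̲, S̄] × Y : S ∈ B̂(γ)} be its graph. Then B is closed in [S̲, S̄] × Y with respect to the product of the topology τ^w on [S̲, S̄] and the topology τ of convergence in probability on Y; equivalently, every (S, γ) in the closure of B satisfies S_t·1_{{Δγ_t ≠ 0}} = S̲_t·1_{{Δγ_t < 0}} + S̄_t·1_{{Δγ_t > 0}} for t = 0,…,T. -/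
open MeasureTheory Filter Set Topology
open scoped ENNReal

noncomputable section

open Shadow MeasureTheory
open scoped ENNReal
section Aux

open MeasureTheory Filter Set Topology Shadow
open scoped ENNReal

variable {Ω : Type*} [MeasurableSpace Ω]

lemma aux_integrable_of_between {P : Measure Ω} {f fl fu : Ω → ℝ}
    (hm : AEStronglyMeasurable f P) (hfl : Integrable fl P) (hfu : Integrable fu P)
    (h : ∀ᵐ ω ∂P, fl ω ≤ f ω ∧ f ω ≤ fu ω) : Integrable f P := by
  refine (hfl.abs.add hfu.abs).mono' hm (h.mono fun ω hω => ?_)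
  have h1 := neg_abs_le (fl ω)
  have h2 := le_abs_self (fu ω)
  have h3 := abs_nonneg (fl ω)
  have h4 := abs_nonneg (fu ω)
  rw [Real.norm_eq_abs, abs_le]
  constructor <;> simp only [Pi.add_apply] <;> [linarith [hω.1]; linarith [hω.2]]

lemma aux_rho_comm (P : Measure Ω) (f g : Ω → ℝ) : rhoDist P f g = rhoDist P g f := by
  unfold Shadow.rhoDist
  have : (fun ω => |f ω - g ω| / (1 + |f ω - g ω|))
      = fun ω => |g ω - f ω| / (1 + |g ω - f ω|) := by
    funext ω; rw [abs_sub_comm]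
  rw [this]

lemma aux_markov (P : Measure Ω) [IsProbabilityMeasure P] {g1 g2 : Ω → ℝ}
    (h1 : Measurable g1) (h2 : Measurable g2) {c : ℝ} (hc : 0 < c) :
    P {ω | c ≤ |g1 ω - g2 ω|} ≤ ENNReal.ofReal ((1 + c) / c * rhoDist P g1 g2) := by
  set φ : Ω → ℝ := fun ω => |g1 ω - g2 ω| / (1 + |g1 ω - g2 ω|) with hφ
  have habs : Measurable fun ω => |g1 ω - g2 ω| := (h1.sub h2).abs
  have hφm : Measurable φ := habs.div (measurable_const.add habs)
  have hφ0 : ∀ ω, 0 ≤ φ ω := fun ω => div_nonneg (abs_nonneg _) (by positivity)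
  have hφ1 : ∀ ω, φ ω ≤ 1 := fun ω =>
    div_le_one_of_le₀ (by linarith [abs_nonneg (g1 ω - g2 ω)]) (by positivity)
  have hφint : Integrable φ P := by
    refine (integrable_const (1 : ℝ)).mono' hφm.aestronglyMeasurable (ae_of_all _ fun ω => ?_)
    rw [Real.norm_eq_abs, abs_of_nonneg (hφ0 ω)]; exact hφ1 ω
  set S := {ω | c ≤ |g1 ω - g2 ω|} with hS
  have hSm : MeasurableSet S := habs measurableSet_Ici
  have h3 : c / (1 + c) * (P S).toReal ≤ ∫ ω in S, φ ω ∂P := by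
    have hmono := setIntegral_mono_on
      (integrableOn_const (C := c / (1 + c)) (measure_ne_top P S))
      hφint.integrableOn hSm (fun ω hω => ?_)
    · rwa [setIntegral_const, smul_eq_mul, mul_comm] at hmono
    · have hx : c ≤ |g1 ω - g2 ω| := hω
      rw [div_le_div_iff₀ (by positivity) (by positivity)]
      nlinarith [abs_nonneg (g1 ω - g2 ω)]
  have h4 : ∫ ω in S, φ ω ∂P ≤ rhoDist P g1 g2 :=
    setIntegral_le_integral hφint (ae_of_all _ hφ0)
  have h5 : (P S).toReal ≤ (1 + c) / c * rhoDist P g1 g2 := by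
    have hk := h3.trans h4
    have e : (1 + c) / c * (c / (1 + c) * (P S).toReal) = (P S).toReal := by
      field_simp
    calc (P S).toReal = (1 + c) / c * (c / (1 + c) * (P S).toReal) := e.symm
      _ ≤ (1 + c) / c * rhoDist P g1 g2 :=
        mul_le_mul_of_nonneg_left hk (by positivity)
  calc P S = ENNReal.ofReal (P S).toReal := (ENNReal.ofReal_toReal (measure_ne_top P S)).symm
    _ ≤ ENNReal.ofReal ((1 + c) / c * rhoDist P g1 g2) := ENNReal.ofReal_le_ofReal h5

lemma aux_extStrat_meas {T : ℕ} {γ : ℕ → Ω → ℝ} (hγ : ∀ k, Measurable (γ k)) (s : ℤ) :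
    Measurable (extStrat T γ s) := by
  unfold Shadow.extStrat
  split_ifs
  · exact hγ _
  · exact measurable_const

lemma aux_dGamma_meas {T t : ℕ} {γ : ℕ → Ω → ℝ} (hγ : ∀ k, Measurable (γ k)) :
    Measurable (dGamma T γ t) := by
  unfold Shadow.dGamma
  exact (aux_extStrat_meas hγ _).sub (aux_extStrat_meas hγ _)

lemma aux_dGamma_diff (T t : ℕ) (γ γ' : ℕ → Ω → ℝ) (ω : Ω) :
    |dGamma T γ' t ω - dGamma T γ t ω| ≤
      |γ' t ω - γ t ω| + |γ' (t - 1) ω - γ (t - 1) ω| := by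
  have key : ∀ a b u v : ℝ, |(a - u) - (b - v)| ≤ |a - b| + |u - v| := by
    intro a b u v
    rw [show (a - u) - (b - v) = (a - b) - (u - v) by ring]
    exact abs_sub _ _
  have ha : ((t : ℤ)).toNat = t := by omega
  have hb : ((t : ℤ) - 1).toNat = t - 1 := by omega
  unfold Shadow.dGamma Shadow.extStrat
  rw [ha, hb]
  split_ifs with h1 h2 h2
  · exact key _ _ _ _
  · simp only [Pi.zero_apply, sub_zero]
    exact le_add_of_nonneg_right (abs_nonneg _)
  · simp only [Pi.zero_apply, zero_sub]
    rw [show -(γ' (t - 1) ω) - -(γ (t - 1) ω) = -(γ' (t - 1) ω - γ (t - 1) ω) by ring, abs_neg]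
    exact le_add_of_nonneg_left (abs_nonneg _)
  · simp only [Pi.zero_apply, sub_zero, sub_self, abs_zero]
    positivity

lemma aux_weak_open {P : Measure Ω} {p : ℝ≥0∞} {g : Ω → ℝ} (hg : MemLp g p P)
    (t : ℕ) (u : Set ℝ) (hu : IsOpen u) :
    IsOpen[weakTopProc P p] {S : ℕ → Ω → ℝ | (∫ ω, S t ω * g ω ∂P) ∈ u} := by
  have heval : Continuous[weakTopProc P p, weakTop P p] (fun S : ℕ → Ω → ℝ => S t) :=
    continuous_iInf_dom continuous_induced_dom
  have hpair : Continuous[weakTop P p, inferInstance] (fun S : Ω → ℝ => ∫ ω, S ω * g ω ∂P) :=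
    continuous_iInf_dom (continuous_iInf_dom (i := hg) continuous_induced_dom)
  have hcomp := @Continuous.comp (ℕ → Ω → ℝ) (Ω → ℝ) ℝ (weakTopProc P p) (weakTop P p) _
    _ _ hpair heval
  exact @Continuous.isOpen_preimage _ _ (weakTopProc P p) _ _ hcomp u hu

lemma aux_prob_open {P : Measure Ω} (f : Ω → ℝ) {η : ℝ} (hη : 0 < η) (k : ℕ) :
    IsOpen[probTopProc P] {γ : ℕ → Ω → ℝ | rhoDist P f (γ k) < η} := by
  have heval : Continuous[probTopProc P, probTop P] (fun γ : ℕ → Ω → ℝ => γ k) :=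
    continuous_iInf_dom continuous_induced_dom
  have hG : IsOpen[probTop P] {h : Ω → ℝ | rhoDist P f h < η} :=
    TopologicalSpace.isOpen_generateFrom_of_mem ⟨f, η, hη, rfl⟩
  exact @Continuous.isOpen_preimage _ _ (probTopProc P) (probTop P) _ heval _ hG

end Aux
section Key

open MeasureTheory Filter Set Topology Shadow
open scoped ENNReal

variable {Ω : Type*} [MeasurableSpace Ω]

lemma aux_key (P : Measure Ω) [IsProbabilityMeasure P]
    {f fl fu d : Ω → ℝ} (hfm : AEStronglyMeasurable f P) (hd : Measurable d)
    (hfl_int : Integrable fl P) (hfu_int : Integrable fu P)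
    (hbnd : ∀ᵐ ω ∂P, fl ω ≤ f ω ∧ f ω ≤ fu ω)
    (happrox : ∀ A : Set Ω, MeasurableSet A → ∀ ε : ℝ, 0 < ε → ∀ δ : ℝ, 0 < δ →
      ∀ κ : ℝ, 0 < κ →
      ∃ f' d' : Ω → ℝ, AEStronglyMeasurable f' P ∧ Measurable d' ∧
        (∀ᵐ ω ∂P, fl ω ≤ f' ω ∧ f' ω ≤ fu ω) ∧
        (∀ᵐ ω ∂P, d' ω < 0 → f' ω = fl ω) ∧
        |(∫ ω in A, f' ω ∂P) - ∫ ω in A, f ω ∂P| < ε ∧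
        P {ω | δ ≤ |d' ω - d ω|} < ENNReal.ofReal κ) :
    ∀ᵐ ω ∂P, d ω < 0 → f ω = fl ω := by
  have hf_int : Integrable f P := aux_integrable_of_between hfm hfl_int hfu_int hbnd
  suffices H : ∀ δ : ℝ, 0 < δ → ∀ᵐ ω ∂P, d ω ≤ -δ → f ω = fl ω by
    have H' : ∀ᵐ ω ∂P, ∀ n : ℕ, d ω ≤ -(1 / ((n : ℝ) + 1)) → f ω = fl ω :=
      ae_all_iff.2 fun n => H _ (by positivity)
    filter_upwards [H'] with ω hω hdω
    obtain ⟨n, hn⟩ := exists_nat_one_div_lt (show (0 : ℝ) < -d ω by linarith)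
    exact hω n (by linarith)
  intro δ hδ
  set A : Set Ω := {ω | d ω ≤ -δ} with hA_def
  have hA : MeasurableSet A := hd measurableSet_Iic
  choose f' d' hf'm hd'm hbnd' himp' hpair hmeas using
    fun n : ℕ => happrox A hA (1 / ((n : ℝ) + 1)) (by positivity) δ hδ
      (1 / ((n : ℝ) + 1)) (by positivity)
  have hf'_int : ∀ n, Integrable (f' n) P := fun n =>
    aux_integrable_of_between (hf'm n) hfl_int hfu_int (hbnd' n)
  have hBm : ∀ n, MeasurableSet {ω | 0 ≤ d' n ω} := fun n => (hd'm n) measurableSet_Ici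
  have hPs : Tendsto (fun n => P (A ∩ {ω | 0 ≤ d' n ω})) atTop (𝓝 0) := by
    refine tendsto_of_tendsto_of_tendsto_of_le_of_le (tendsto_const_nhds)
      (?_ : Tendsto (fun n : ℕ => ENNReal.ofReal (1 / ((n : ℝ) + 1))) atTop (𝓝 0))
      (fun n => zero_le) (fun n => ?_)
    · have := ENNReal.tendsto_ofReal tendsto_one_div_add_atTop_nhds_zero_nat
      simpa using this
    · refine le_trans (measure_mono ?_) (hmeas n).le
      rintro ω ⟨h1, h2⟩
      have hd1 : d ω ≤ -δ := h1
      have hd2 : (0 : ℝ) ≤ d' n ω := h2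
      have : δ ≤ d' n ω - d ω := by linarith
      exact le_trans this (le_abs_self _)
  have hgood : Tendsto (fun n => ∫ ω in A ∩ {ω | 0 ≤ d' n ω}, (fu ω - fl ω) ∂P) atTop (𝓝 0) :=
    (hfu_int.sub hfl_int).tendsto_setIntegral_nhds_zero hPs
  have hbound : ∀ n : ℕ, ∫ ω in A, (f ω - fl ω) ∂P
      ≤ 1 / ((n : ℝ) + 1) + ∫ ω in A ∩ {ω | 0 ≤ d' n ω}, (fu ω - fl ω) ∂P := by
    intro n
    have hIA : ∫ ω in A, (f ω - fl ω) ∂P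
        = ((∫ ω in A, f ω ∂P) - ∫ ω in A, f' n ω ∂P) + ∫ ω in A, (f' n ω - fl ω) ∂P := by
      rw [integral_sub hf_int.integrableOn hfl_int.integrableOn,
        integral_sub (hf'_int n).integrableOn hfl_int.integrableOn]
      ring
    have hsplit : (∫ ω in A ∩ {ω | 0 ≤ d' n ω}, (f' n ω - fl ω) ∂P)
        + ∫ ω in A \ {ω | 0 ≤ d' n ω}, (f' n ω - fl ω) ∂P
        = ∫ ω in A, (f' n ω - fl ω) ∂P :=
      integral_inter_add_diff (hBm n) ((hf'_int n).sub hfl_int).integrableOn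
    have hzero : ∫ ω in A \ {ω | 0 ≤ d' n ω}, (f' n ω - fl ω) ∂P = 0 := by
      have hae : ∀ᵐ ω ∂P.restrict (A \ {ω | 0 ≤ d' n ω}), f' n ω - fl ω = 0 := by
        rw [ae_restrict_iff' (hA.diff (hBm n))]
        filter_upwards [himp' n] with ω hω hmem
        have hneg : d' n ω < 0 := by
          have := hmem.2
          simp only [mem_setOf_eq, not_le] at this
          exact this
        rw [hω hneg]; ring
      calc ∫ ω in A \ {ω | 0 ≤ d' n ω}, (f' n ω - fl ω) ∂P
          = ∫ _ω in A \ {ω | 0 ≤ d' n ω}, (0 : ℝ) ∂P := integral_congr_ae hae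
        _ = 0 := by simp
    have hmono : ∫ ω in A ∩ {ω | 0 ≤ d' n ω}, (f' n ω - fl ω) ∂P
        ≤ ∫ ω in A ∩ {ω | 0 ≤ d' n ω}, (fu ω - fl ω) ∂P :=
      setIntegral_mono_ae ((hf'_int n).sub hfl_int).integrableOn
        (hfu_int.sub hfl_int).integrableOn
        ((hbnd' n).mono fun ω h => by
          have := h.2
          simp only [Pi.sub_apply]
          linarith)
    have habs := abs_lt.1 (hpair n)
    linarith [habs.1, habs.2]
  have hnonneg : 0 ≤ ∫ ω in A, (f ω - fl ω) ∂P :=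
    setIntegral_nonneg_of_ae (hbnd.mono fun ω h => sub_nonneg.2 h.1)
  have hle0 : ∫ ω in A, (f ω - fl ω) ∂P ≤ 0 := by
    have hlim : Tendsto (fun n : ℕ =>
        1 / ((n : ℝ) + 1) + ∫ ω in A ∩ {ω | 0 ≤ d' n ω}, (fu ω - fl ω) ∂P) atTop (𝓝 0) := by
      have := tendsto_one_div_add_atTop_nhds_zero_nat.add hgood
      simpa using this
    exact ge_of_tendsto' hlim hbound
  have hI0 : ∫ ω in A, (f ω - fl ω) ∂P = 0 := le_antisymm hle0 hnonneg
  have heq := (setIntegral_eq_zero_iff_of_nonneg_ae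
    (ae_restrict_of_ae (hbnd.mono fun ω h => sub_nonneg.2 h.1))
    (hf_int.sub hfl_int).integrableOn).1 hI0
  have heq' : ∀ᵐ ω ∂P, ω ∈ A → f ω - fl ω = 0 := by
    have := (ae_restrict_iff' hA).1 heq
    filter_upwards [this] with ω hω hmem
    simpa using hω hmem
  filter_upwards [heq'] with ω hω hdω
  have := hω hdω
  linarith

end Key

/-- The graph `B` of the set-valued map
`B̂(γ) = ∏_t ({S̲_t}·1_{Δγ_t<0} + {S̄_t}·1_{Δγ_t>0} + [S̲_t,S̄_t]·1_{Δγ_t=0})`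
is closed in `[S̲, S̄] × 𝒴` with respect to the product of the weak topology `τ^w` and the
topology `τ` of convergence in probability. -/
theorem statement9
    {Ω : Type*} [MeasurableSpace Ω] (P : Measure Ω) [IsProbabilityMeasure P]
    (T : ℕ) (F : ℕ → MeasurableSpace Ω)
    (hF_mono : Monotone F) (hF_le : ∀ t, F t ≤ ‹MeasurableSpace Ω›)
    (q p : ℝ≥0∞) (hq : 1 ≤ q) (hpq : 1 / p + 1 / q = 1)
    (Sl Su : ℕ → Ω → ℝ)
    (hSl_meas : ∀ t, Measurable[F t] (Sl t)) (hSu_meas : ∀ t, Measurable[F t] (Su t))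
    (hS_ord : ∀ t, ∀ᵐ ω ∂P, 0 < Sl t ω ∧ Sl t ω ≤ Su t ω)
    (hSl_Lq : ∀ t, MemLp (Sl t) q P) (hSu_Lq : ∀ t, MemLp (Su t) q P)
    (s : ℝ≥0∞) (hs : s = 0 ∨ s = ∞)
    (𝒴 : Set (ℕ → Ω → ℝ)) (h𝒴conv : Convex ℝ 𝒴)
    (h𝒴ad : ∀ γ ∈ 𝒴, ∀ t, Measurable[F t] (γ t) ∧ MemLp (γ t) s P) :
    ∀ Sγ : (ℕ → Ω → ℝ) × (ℕ → Ω → ℝ),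
      Sγ ∈ @closure _ (@instTopologicalSpaceProd _ _ (weakTopProc P p) (probTopProc P))
        {Sγ' : (ℕ → Ω → ℝ) × (ℕ → Ω → ℝ) |
          Sγ'.1 ∈ priceInterval F P Sl Su ∧ Sγ'.2 ∈ 𝒴 ∧
          ∀ t ≤ T, ∀ᵐ ω ∂P,
            (dGamma T Sγ'.2 t ω < 0 → Sγ'.1 t ω = Sl t ω) ∧
            (0 < dGamma T Sγ'.2 t ω → Sγ'.1 t ω = Su t ω)} →
      Sγ.1 ∈ priceInterval F P Sl Su → Sγ.2 ∈ 𝒴 →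
      ∀ t ≤ T, ∀ᵐ ω ∂P,
        (dGamma T Sγ.2 t ω < 0 → Sγ.1 t ω = Sl t ω) ∧
        (0 < dGamma T Sγ.2 t ω → Sγ.1 t ω = Su t ω) := by
  rintro ⟨S, γ⟩ hcl hS hγ t ht
  dsimp only at hS hγ ⊢
  have hγm : ∀ k, Measurable (γ k) := fun k => ((h𝒴ad γ hγ k).1).mono (hF_le k) le_rfl
  have hSm : ∀ k, Measurable (S k) := fun k => ((hS k).1).mono (hF_le k) le_rfl
  have hd : Measurable (dGamma T γ t) := aux_dGamma_meas hγm
  have hSl_int : Integrable (Sl t) P := (hSl_Lq t).integrable hq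
  have hSu_int : Integrable (Su t) P := (hSu_Lq t).integrable hq
  have hbnd : ∀ᵐ ω ∂P, Sl t ω ≤ S t ω ∧ S t ω ≤ Su t ω := (hS t).2
  -- from the closure hypothesis, produce approximating points
  have happ : ∀ A : Set Ω, MeasurableSet A → ∀ ε : ℝ, 0 < ε → ∀ δ : ℝ, 0 < δ →
      ∀ κ : ℝ, 0 < κ →
      ∃ S' γ' : ℕ → Ω → ℝ, S' ∈ priceInterval F P Sl Su ∧ γ' ∈ 𝒴 ∧
        (∀ᵐ ω ∂P, (dGamma T γ' t ω < 0 → S' t ω = Sl t ω) ∧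
          (0 < dGamma T γ' t ω → S' t ω = Su t ω)) ∧
        |(∫ ω in A, S' t ω ∂P) - ∫ ω in A, S t ω ∂P| < ε ∧
        P {ω | δ ≤ |dGamma T γ' t ω - dGamma T γ t ω|} < ENNReal.ofReal κ := by
    intro A hA ε hε δ hδ κ hκ
    set c : ℝ := δ / 2 with hc
    have hcpos : 0 < c := by positivity
    set η : ℝ := c / (1 + c) * (κ / 4) with hη
    have hηpos : 0 < η := by positivity
    set g : Ω → ℝ := A.indicator (fun _ => (1 : ℝ)) with hg
    have hgLp : MemLp g p P := by
      refine MemLp.of_bound ((measurable_const.indicator hA).aestronglyMeasurable) 1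
        (ae_of_all _ fun ω => ?_)
      by_cases hω : ω ∈ A <;> simp [hg, Set.indicator, hω]
    set O1 : Set (ℕ → Ω → ℝ) :=
      {S' | (∫ ω, S' t ω * g ω ∂P) ∈ Metric.ball (∫ ω, S t ω * g ω ∂P) ε} with hO1def
    have hO1 : IsOpen[weakTopProc P p] O1 := aux_weak_open hgLp t _ Metric.isOpen_ball
    set b : ℕ := t - 1 with hb
    set O2 : Set (ℕ → Ω → ℝ) :=
      {γ' | rhoDist P (γ t) (γ' t) < η} ∩ {γ' | rhoDist P (γ b) (γ' b) < η} with hO2def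
    have hO2 : IsOpen[probTopProc P] O2 :=
      @IsOpen.inter _ (probTopProc P) _ _ (aux_prob_open (γ t) hηpos t)
        (aux_prob_open (γ b) hηpos b)
    have hO : @IsOpen _ (@instTopologicalSpaceProd _ _ (weakTopProc P p) (probTopProc P))
        (O1 ×ˢ O2) := @IsOpen.prod _ _ (weakTopProc P p) (probTopProc P) _ _ hO1 hO2
    have hrho_self : ∀ k : ℕ, rhoDist P (γ k) (γ k) = 0 := by
      intro k; unfold Shadow.rhoDist; simp
    have hmem : ((S, γ) : (ℕ → Ω → ℝ) × (ℕ → Ω → ℝ)) ∈ O1 ×ˢ O2 := by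
      refine ⟨Metric.mem_ball_self hε, ?_, ?_⟩ <;>
        · show rhoDist P _ _ < η
          rw [hrho_self]; exact hηpos
    obtain ⟨⟨S', γ'⟩, hmemO, hmemB⟩ :=
      (@mem_closure_iff _
        (@instTopologicalSpaceProd _ _ (weakTopProc P p) (probTopProc P)) _ _).1 hcl _ hO hmem
    obtain ⟨hS'P, hγ'Y, hB⟩ := hmemB
    have hγ'm : ∀ k, Measurable (γ' k) := fun k => ((h𝒴ad γ' hγ'Y k).1).mono (hF_le k) le_rfl
    refine ⟨S', γ', hS'P, hγ'Y, hB t ht, ?_, ?_⟩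
    · have h := hmemO.1
      rw [hO1def] at h
      have e : ∀ h' : Ω → ℝ, ∫ ω, h' ω * g ω ∂P = ∫ ω in A, h' ω ∂P := by
        intro h'
        have hfe : (fun ω => h' ω * g ω) = A.indicator h' := by
          funext ω; by_cases hω : ω ∈ A <;> simp [hg, Set.indicator, hω]
        rw [hfe, integral_indicator hA]
      have h' : |(∫ ω, S' t ω * g ω ∂P) - ∫ ω, S t ω * g ω ∂P| < ε := by
        rw [← Real.dist_eq]; exact h
      rwa [e (S' t), e (S t)] at h'
    · have hrho1 : rhoDist P (γ' t) (γ t) < η := by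
        rw [aux_rho_comm]; exact hmemO.2.1
      have hrho2 : rhoDist P (γ' b) (γ b) < η := by
        rw [aux_rho_comm]; exact hmemO.2.2
      have hsub : {ω | δ ≤ |dGamma T γ' t ω - dGamma T γ t ω|} ⊆
          {ω | c ≤ |γ' t ω - γ t ω|} ∪ {ω | c ≤ |γ' b ω - γ b ω|} := by
        intro ω hω
        by_contra hn
        simp only [Set.mem_union, Set.mem_setOf_eq, not_or, not_le] at hn
        have hdiff := aux_dGamma_diff T t γ γ' ω
        have hω' : δ ≤ |dGamma T γ' t ω - dGamma T γ t ω| := hω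
        rw [hb] at hn
        have := hn.1
        have := hn.2
        have hcδ : c = δ / 2 := hc
        linarith [le_trans hω' hdiff]
      have hm1 := aux_markov P (hγ'm t) (hγm t) hcpos
      have hm2 := aux_markov P (hγ'm b) (hγm b) hcpos
      have hkey : ∀ r : ℝ, r < η → (1 + c) / c * r ≤ κ / 4 := by
        intro r hr
        have hle : (1 + c) / c * r ≤ (1 + c) / c * η :=
          mul_le_mul_of_nonneg_left hr.le (by positivity)
        have he : (1 + c) / c * η = κ / 4 := by
          rw [hη]; field_simp
        linarith
      calc P {ω | δ ≤ |dGamma T γ' t ω - dGamma T γ t ω|}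
          ≤ P ({ω | c ≤ |γ' t ω - γ t ω|} ∪ {ω | c ≤ |γ' b ω - γ b ω|}) := measure_mono hsub
        _ ≤ P {ω | c ≤ |γ' t ω - γ t ω|} + P {ω | c ≤ |γ' b ω - γ b ω|} :=
            measure_union_le _ _
        _ ≤ ENNReal.ofReal ((1 + c) / c * rhoDist P (γ' t) (γ t))
            + ENNReal.ofReal ((1 + c) / c * rhoDist P (γ' b) (γ b)) := add_le_add hm1 hm2
        _ ≤ ENNReal.ofReal (κ / 4) + ENNReal.ofReal (κ / 4) :=
            add_le_add (ENNReal.ofReal_le_ofReal (hkey _ hrho1))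
              (ENNReal.ofReal_le_ofReal (hkey _ hrho2))
        _ = ENNReal.ofReal (κ / 4 + κ / 4) :=
            (ENNReal.ofReal_add (by positivity) (by positivity)).symm
        _ < ENNReal.ofReal κ := by
            rw [ENNReal.ofReal_lt_ofReal_iff hκ]; linarith
  -- lower part
  have Hlow : ∀ᵐ ω ∂P, dGamma T γ t ω < 0 → S t ω = Sl t ω := by
    refine aux_key P (hSm t).aestronglyMeasurable hd hSl_int hSu_int hbnd ?_
    intro A hA ε hε δ hδ κ hκ
    obtain ⟨S', γ', hS'P, hγ'Y, hB, hpair, hmeas⟩ := happ A hA ε hε δ hδ κ hκ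
    exact ⟨S' t, dGamma T γ' t,
      ((((hS'P t).1).mono (hF_le t) le_rfl)).aestronglyMeasurable,
      aux_dGamma_meas (fun k => ((h𝒴ad γ' hγ'Y k).1).mono (hF_le k) le_rfl),
      (hS'P t).2, hB.mono fun ω h => h.1, hpair, hmeas⟩
  -- upper part (by symmetry, negating everything)
  have Hup : ∀ᵐ ω ∂P, -(dGamma T γ t ω) < 0 → -(S t ω) = -(Su t ω) := by
    refine aux_key P (d := fun ω => -(dGamma T γ t ω)) (fl := fun ω => -(Su t ω))
      (fu := fun ω => -(Sl t ω))
      ((hSm t).neg).aestronglyMeasurable hd.neg hSu_int.neg hSl_int.neg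
      (hbnd.mono fun ω h => ⟨show -(Su t ω) ≤ -(S t ω) by linarith [h.2],
        show -(S t ω) ≤ -(Sl t ω) by linarith [h.1]⟩) ?_
    intro A hA ε hε δ hδ κ hκ
    obtain ⟨S', γ', hS'P, hγ'Y, hB, hpair, hmeas⟩ := happ A hA ε hε δ hδ κ hκ
    refine ⟨fun ω => -(S' t ω), fun ω => -(dGamma T γ' t ω),
      (((hS'P t).1).mono (hF_le t) le_rfl).neg.aestronglyMeasurable,
      (aux_dGamma_meas (fun k => ((h𝒴ad γ' hγ'Y k).1).mono (hF_le k) le_rfl)).neg,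
      (hS'P t).2.mono fun ω h => ⟨show -(Su t ω) ≤ -(S' t ω) by linarith [h.2],
        show -(S' t ω) ≤ -(Sl t ω) by linarith [h.1]⟩,
      hB.mono fun ω h => by
        intro hneg
        show -(S' t ω) = -(Su t ω)
        have hneg' : -(dGamma T γ' t ω) < 0 := hneg
        have hpos : 0 < dGamma T γ' t ω := by linarith
        rw [h.2 hpos], ?_, ?_⟩
    · show |(∫ ω in A, -(S' t ω) ∂P) - ∫ ω in A, -(S t ω) ∂P| < ε
      rw [integral_neg, integral_neg]
      rw [show -(∫ ω in A, S' t ω ∂P) - -(∫ ω in A, S t ω ∂P)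
          = -((∫ ω in A, S' t ω ∂P) - ∫ ω in A, S t ω ∂P) by ring, abs_neg]
      exact hpair
    · show P {ω | δ ≤ |-(dGamma T γ' t ω) - -(dGamma T γ t ω)|} < ENNReal.ofReal κ
      have hset : {ω | δ ≤ |-(dGamma T γ' t ω) - -(dGamma T γ t ω)|}
          = {ω | δ ≤ |dGamma T γ' t ω - dGamma T γ t ω|} := by
        ext ω
        simp only [Set.mem_setOf_eq]
        rw [show -(dGamma T γ' t ω) - -(dGamma T γ t ω)
            = -(dGamma T γ' t ω - dGamma T γ t ω) by ring, abs_neg]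
      rw [hset]
      exact hmeas
  filter_upwards [Hlow, Hup] with ω h1 h2
  refine ⟨h1, fun hpos => ?_⟩
  have := h2 (by linarith)
  linarith
end
end

section
/- In the one-period model of Example 3, assume additionally that U is strictly increasing and differentiable and that an optimal solution γ_0* ∈ ℝ of the problem maximize E[U(X_1(γ))] over γ_0 ∈ ℝ exists. Then a pair (S*, γ*) is a saddle point of the relaxed functional Ψ̂ if and only if (i) S*_1 · 1_{{γ_0* ≠ 0}} = S̲_1 · 1_{{γ_0* > 0}} + S̄_1 · 1_{{γ_0* < 0}}, and (ii) E[(S*_1 − S_0) U′(1 + γ_0*(S*_1 − S_0))] = 0. Consequently, in this model every generalized shadow price is a shadow price: if S* is a generalized shadow price then sup_{γ_0∈ℝ} E[U(1 + γ_0(S*_1 − S_0))] = λ. -/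
open MeasureTheory Filter Set Topology
open scoped ENNReal

noncomputable section

open Shadow MeasureTheory
open scoped ENNReal

noncomputable section

/-- Lebesgue measure on `Ω = [0,1]`. -/
def P15 : MeasureTheory.Measure ℝ := MeasureTheory.volume.restrict (Set.Icc 0 1)

/-- the order interval `[S̲_1, S̄_1] ⊆ L^1`. -/
def I15 (Sl Su : ℝ → ℝ) : Set (ℝ → ℝ) :=
  {f | Measurable f ∧ ∀ᵐ ω ∂P15, Sl ω ≤ f ω ∧ f ω ≤ Su ω}

/-- terminal wealth `X_1(γ) = 1 + γ₀⁺(S̲_1 − S_0) − γ₀⁻(S̄_1 − S_0)`. -/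
def X1ex3 (S0 : ℝ) (Sl Su : ℝ → ℝ) (γ0 : ℝ) (ω : ℝ) : ℝ :=
  1 + max γ0 0 * (Sl ω - S0) - max (-γ0) 0 * (Su ω - S0)

/-- the relaxed utility `Ψ̂(S, γ)` of Example 3, given by its explicit formula. -/
def PsiHat3 (S0 : ℝ) (Sl Su : ℝ → ℝ) (U : ℝ → ℝ) (f : ℝ → ℝ) (γ0 : ℝ) : ℝ :=
  ∫ ω, (U (1 + γ0 * (Su ω - S0)) * ((f ω - Sl ω) / (Su ω - Sl ω)) +
        U (1 + γ0 * (Sl ω - S0)) * ((Su ω - f ω) / (Su ω - Sl ω))) ∂P15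

/-! ### Auxiliary machinery for Example 3 -/

instance P15_prob : IsProbabilityMeasure P15 :=
  ⟨by simp [P15, Real.volume_Icc]⟩

lemma ex3_ae_bound {g : ℝ → ℝ} (h : MemLp g ∞ P15) :
    ∃ C : ℝ, 0 ≤ C ∧ ∀ᵐ ω ∂P15, |g ω| ≤ C := by
  refine ⟨(eLpNormEssSup g P15).toReal, ENNReal.toReal_nonneg, ?_⟩
  have h2 : eLpNormEssSup g P15 ≠ ⊤ := by
    have h3 := h.2
    rw [eLpNorm_exponent_top] at h3
    exact h3.ne
  filter_upwards [ae_le_eLpNormEssSup (f := g) (μ := P15)] with ω hω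
  have h4 : ((‖g ω‖₊ : ℝ≥0∞)).toReal ≤ (eLpNormEssSup g P15).toReal :=
    ENNReal.toReal_mono h2 hω
  simpa [Real.norm_eq_abs] using h4

lemma ex3_integrable {g : ℝ → ℝ} (hm : AEStronglyMeasurable g P15) {C : ℝ}
    (h : ∀ᵐ ω ∂P15, |g ω| ≤ C) : Integrable g P15 :=
  (integrable_const C).mono' hm (h.mono fun ω hω => by simpa [Real.norm_eq_abs] using hω)

lemma ex3_tangent {U : ℝ → ℝ} (hU_conc : ConcaveOn ℝ Set.univ U)
    (hU_diff : Differentiable ℝ U) (x y : ℝ) :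
    U y ≤ U x + deriv U x * (y - x) := by
  rcases lt_trichotomy x y with h | rfl | h
  · have h2 := hU_conc.slope_le_deriv (Set.mem_univ x) (Set.mem_univ y) h (hU_diff x)
    rw [slope_def_field, div_le_iff₀ (by linarith)] at h2
    linarith
  · simp
  · have h2 := hU_conc.deriv_le_slope (Set.mem_univ y) (Set.mem_univ x) h (hU_diff x)
    rw [slope_def_field, le_div_iff₀ (by linarith)] at h2
    have h3 : deriv U x * (y - x) = -(deriv U x * (x - y)) := by ring
    linarith

lemma ex3_deriv_pos {U : ℝ → ℝ} (hU_mono : StrictMono U) (hU_conc : ConcaveOn ℝ Set.univ U)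
    (hU_diff : Differentiable ℝ U) (x : ℝ) : 0 < deriv U x := by
  have h1 := ex3_tangent hU_conc hU_diff x (x + 1)
  have h2 := hU_mono (lt_add_one x)
  have h3 : x + 1 - x = 1 := by ring
  rw [h3, mul_one] at h1
  linarith

lemma ex3_deriv_anti {U : ℝ → ℝ} (hU_conc : ConcaveOn ℝ Set.univ U)
    (hU_diff : Differentiable ℝ U) : Antitone (deriv U) := fun a b hab =>
  hU_conc.antitoneOn_deriv (fun x _ => hU_diff x) (Set.mem_univ a) (Set.mem_univ b) hab

lemma ex3_absU {U : ℝ → ℝ} (hU_mono : StrictMono U) {R x : ℝ} (hx : |x| ≤ R) :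
    |U x| ≤ max |U (-R)| |U R| := by
  rcases abs_le.1 hx with ⟨h1, h2⟩
  have l1 : U x ≤ U R := hU_mono.monotone h2
  have l2 : U (-R) ≤ U x := hU_mono.monotone h1
  have m1 := le_max_left |U (-R)| |U R|
  have m2 := le_max_right |U (-R)| |U R|
  have m3 := le_abs_self (U R)
  have m4 := neg_abs_le (U (-R))
  rw [abs_le]
  constructor <;> linarith

lemma ex3_weights {sl su fv S0 : ℝ} (h1 : 0 < su - sl) (h2 : sl ≤ fv) (h3 : fv ≤ su) :
    0 ≤ (fv - sl) / (su - sl) ∧ (fv - sl) / (su - sl) ≤ 1 ∧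
    0 ≤ (su - fv) / (su - sl) ∧ (su - fv) / (su - sl) ≤ 1 ∧
    (fv - sl) / (su - sl) + (su - fv) / (su - sl) = 1 ∧
    (fv - sl) / (su - sl) * (su - S0) + (su - fv) / (su - sl) * (sl - S0) = fv - S0 := by
  refine ⟨div_nonneg (by linarith) h1.le, (div_le_one h1).2 (by linarith),
    div_nonneg (by linarith) h1.le, (div_le_one h1).2 (by linarith), ?_, ?_⟩
  · field_simp
    ring
  · field_simp
    ring

/-- the integrand of `PsiHat3`. -/
def Fi3 (S0 : ℝ) (Sl Su U f : ℝ → ℝ) (γ ω : ℝ) : ℝ :=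
  U (1 + γ * (Su ω - S0)) * ((f ω - Sl ω) / (Su ω - Sl ω)) +
  U (1 + γ * (Sl ω - S0)) * ((Su ω - f ω) / (Su ω - Sl ω))

/-- the pointwise derivative of the integrand of `PsiHat3` in `γ`. -/
def Gi3 (S0 : ℝ) (Sl Su U f : ℝ → ℝ) (γ ω : ℝ) : ℝ :=
  deriv U (1 + γ * (Su ω - S0)) * (Su ω - S0) * ((f ω - Sl ω) / (Su ω - Sl ω)) +
  deriv U (1 + γ * (Sl ω - S0)) * (Sl ω - S0) * ((Su ω - f ω) / (Su ω - Sl ω))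

section Machinery

variable {S0 : ℝ} {Sl Su U : ℝ → ℝ} {M : ℝ}

lemma ex3_Fmeas (hSl_meas : Measurable Sl) (hSu_meas : Measurable Su) (hU : Measurable U)
    {f : ℝ → ℝ} (hf : Measurable f) (γ : ℝ) : Measurable (Fi3 S0 Sl Su U f γ) := by
  unfold Fi3
  exact ((hU.comp (((hSu_meas.sub measurable_const).const_mul γ).const_add 1)).mul
      ((hf.sub hSl_meas).div (hSu_meas.sub hSl_meas))).add
    ((hU.comp (((hSl_meas.sub measurable_const).const_mul γ).const_add 1)).mul
      ((hSu_meas.sub hf).div (hSu_meas.sub hSl_meas)))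

lemma ex3_Gmeas (hSl_meas : Measurable Sl) (hSu_meas : Measurable Su)
    (hU' : Measurable (deriv U)) {f : ℝ → ℝ} (hf : Measurable f) (γ : ℝ) :
    Measurable (Gi3 S0 Sl Su U f γ) := by
  unfold Gi3
  exact (((hU'.comp (((hSu_meas.sub measurable_const).const_mul γ).const_add 1)).mul
      (hSu_meas.sub measurable_const)).mul
      ((hf.sub hSl_meas).div (hSu_meas.sub hSl_meas))).add
    (((hU'.comp (((hSl_meas.sub measurable_const).const_mul γ).const_add 1)).mul
      (hSl_meas.sub measurable_const)).mul
      ((hSu_meas.sub hf).div (hSu_meas.sub hSl_meas)))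

lemma ex3_Fbdd (hU_mono : StrictMono U)
    (hgoodM : ∀ᵐ ω ∂P15, |Su ω - S0| ≤ M ∧ |Sl ω - S0| ≤ M ∧ 0 < Su ω - Sl ω)
    {f : ℝ → ℝ} (hf : f ∈ I15 Sl Su) (γ : ℝ) :
    ∀ᵐ ω ∂P15, |Fi3 S0 Sl Su U f γ ω| ≤ 2 * max |U (-(1 + |γ| * M))| |U (1 + |γ| * M)| := by
  filter_upwards [hgoodM, hf.2] with ω hω h45
  obtain ⟨hA, hB, hd⟩ := hω
  obtain ⟨h4, h5⟩ := h45
  obtain ⟨w0, w1, v0, v1, hsum, -⟩ := ex3_weights (S0 := S0) hd h4 h5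
  have keyu : |1 + γ * (Su ω - S0)| ≤ 1 + |γ| * M := by
    have h6 : |γ * (Su ω - S0)| ≤ |γ| * M := by
      rw [abs_mul]; exact mul_le_mul_of_nonneg_left hA (abs_nonneg γ)
    calc |1 + γ * (Su ω - S0)| ≤ |(1 : ℝ)| + |γ * (Su ω - S0)| := abs_add_le 1 _
      _ ≤ 1 + |γ| * M := by rw [abs_one]; linarith
  have keyl : |1 + γ * (Sl ω - S0)| ≤ 1 + |γ| * M := by
    have h6 : |γ * (Sl ω - S0)| ≤ |γ| * M := by
      rw [abs_mul]; exact mul_le_mul_of_nonneg_left hB (abs_nonneg γ)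
    calc |1 + γ * (Sl ω - S0)| ≤ |(1 : ℝ)| + |γ * (Sl ω - S0)| := abs_add_le 1 _
      _ ≤ 1 + |γ| * M := by rw [abs_one]; linarith
  have hu := ex3_absU hU_mono keyu
  have hl := ex3_absU hU_mono keyl
  have hB0 : (0 : ℝ) ≤ max |U (-(1 + |γ| * M))| |U (1 + |γ| * M)| :=
    le_trans (abs_nonneg _) (le_max_left _ _)
  have t1 : |U (1 + γ * (Su ω - S0)) * ((f ω - Sl ω) / (Su ω - Sl ω))| ≤
      max |U (-(1 + |γ| * M))| |U (1 + |γ| * M)| * ((f ω - Sl ω) / (Su ω - Sl ω)) := by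
    rw [abs_mul, abs_of_nonneg w0]
    exact mul_le_mul_of_nonneg_right hu w0
  have t2 : |U (1 + γ * (Sl ω - S0)) * ((Su ω - f ω) / (Su ω - Sl ω))| ≤
      max |U (-(1 + |γ| * M))| |U (1 + |γ| * M)| * ((Su ω - f ω) / (Su ω - Sl ω)) := by
    rw [abs_mul, abs_of_nonneg v0]
    exact mul_le_mul_of_nonneg_right hl v0
  have hsum2 : max |U (-(1 + |γ| * M))| |U (1 + |γ| * M)| * ((f ω - Sl ω) / (Su ω - Sl ω)) +
      max |U (-(1 + |γ| * M))| |U (1 + |γ| * M)| * ((Su ω - f ω) / (Su ω - Sl ω)) =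
      max |U (-(1 + |γ| * M))| |U (1 + |γ| * M)| := by
    rw [← mul_add, hsum, mul_one]
  calc |Fi3 S0 Sl Su U f γ ω| ≤ |U (1 + γ * (Su ω - S0)) * ((f ω - Sl ω) / (Su ω - Sl ω))| +
      |U (1 + γ * (Sl ω - S0)) * ((Su ω - f ω) / (Su ω - Sl ω))| := abs_add_le _ _
    _ ≤ 2 * max |U (-(1 + |γ| * M))| |U (1 + |γ| * M)| := by linarith

lemma ex3_Fint (hSl_meas : Measurable Sl) (hSu_meas : Measurable Su)
    (hU_mono : StrictMono U) (hU_cont : Continuous U)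
    (hgoodM : ∀ᵐ ω ∂P15, |Su ω - S0| ≤ M ∧ |Sl ω - S0| ≤ M ∧ 0 < Su ω - Sl ω)
    {f : ℝ → ℝ} (hf : f ∈ I15 Sl Su) (γ : ℝ) :
    Integrable (Fi3 S0 Sl Su U f γ) P15 :=
  ex3_integrable (ex3_Fmeas hSl_meas hSu_meas hU_cont.measurable hf.1 γ).aestronglyMeasurable
    (ex3_Fbdd hU_mono hgoodM hf γ)

lemma ex3_Gpt (hU_mono : StrictMono U) (hU_conc : ConcaveOn ℝ Set.univ U)
    (hU_diff : Differentiable ℝ U) {r : ℝ} {ω : ℝ}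
    (hA : |Su ω - S0| ≤ M) (hB : |Sl ω - S0| ≤ M) (hd : 0 < Su ω - Sl ω)
    {f : ℝ → ℝ} (h4 : Sl ω ≤ f ω) (h5 : f ω ≤ Su ω) {x : ℝ} (hx : |x| ≤ r) :
    |Gi3 S0 Sl Su U f x ω| ≤ deriv U (-(1 + r * M)) * M := by
  obtain ⟨w0, w1, v0, v1, hsum, -⟩ := ex3_weights (S0 := S0) hd h4 h5
  have hr0 : 0 ≤ r := le_trans (abs_nonneg x) hx
  have hM0 : 0 ≤ M := le_trans (abs_nonneg _) hA
  have keyu : -(1 + r * M) ≤ 1 + x * (Su ω - S0) := by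
    have h6 : |x * (Su ω - S0)| ≤ r * M := by
      rw [abs_mul]; exact mul_le_mul hx hA (abs_nonneg _) hr0
    have h7 := (abs_le.1 h6).1
    linarith
  have keyl : -(1 + r * M) ≤ 1 + x * (Sl ω - S0) := by
    have h6 : |x * (Sl ω - S0)| ≤ r * M := by
      rw [abs_mul]; exact mul_le_mul hx hB (abs_nonneg _) hr0
    have h7 := (abs_le.1 h6).1
    linarith
  have du : deriv U (1 + x * (Su ω - S0)) ≤ deriv U (-(1 + r * M)) :=
    ex3_deriv_anti hU_conc hU_diff keyu
  have dl : deriv U (1 + x * (Sl ω - S0)) ≤ deriv U (-(1 + r * M)) :=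
    ex3_deriv_anti hU_conc hU_diff keyl
  have pu := ex3_deriv_pos hU_mono hU_conc hU_diff (1 + x * (Su ω - S0))
  have pl := ex3_deriv_pos hU_mono hU_conc hU_diff (1 + x * (Sl ω - S0))
  have pD := ex3_deriv_pos hU_mono hU_conc hU_diff (-(1 + r * M))
  have t1 : |deriv U (1 + x * (Su ω - S0)) * (Su ω - S0) * ((f ω - Sl ω) / (Su ω - Sl ω))| ≤
      deriv U (-(1 + r * M)) * M * ((f ω - Sl ω) / (Su ω - Sl ω)) := by
    rw [abs_mul, abs_mul, abs_of_pos pu, abs_of_nonneg w0]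
    exact mul_le_mul_of_nonneg_right
      (mul_le_mul du hA (abs_nonneg _) pD.le) w0
  have t2 : |deriv U (1 + x * (Sl ω - S0)) * (Sl ω - S0) * ((Su ω - f ω) / (Su ω - Sl ω))| ≤
      deriv U (-(1 + r * M)) * M * ((Su ω - f ω) / (Su ω - Sl ω)) := by
    rw [abs_mul, abs_mul, abs_of_pos pl, abs_of_nonneg v0]
    exact mul_le_mul_of_nonneg_right
      (mul_le_mul dl hB (abs_nonneg _) pD.le) v0
  have hsum2 : deriv U (-(1 + r * M)) * M * ((f ω - Sl ω) / (Su ω - Sl ω)) +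
      deriv U (-(1 + r * M)) * M * ((Su ω - f ω) / (Su ω - Sl ω)) =
      deriv U (-(1 + r * M)) * M := by
    rw [← mul_add, hsum, mul_one]
  calc |Gi3 S0 Sl Su U f x ω| ≤
      |deriv U (1 + x * (Su ω - S0)) * (Su ω - S0) * ((f ω - Sl ω) / (Su ω - Sl ω))| +
      |deriv U (1 + x * (Sl ω - S0)) * (Sl ω - S0) * ((Su ω - f ω) / (Su ω - Sl ω))| := abs_add_le _ _
    _ ≤ deriv U (-(1 + r * M)) * M := by linarith

lemma ex3_Gint (hSl_meas : Measurable Sl) (hSu_meas : Measurable Su)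
    (hU_mono : StrictMono U) (hU_conc : ConcaveOn ℝ Set.univ U)
    (hU_diff : Differentiable ℝ U)
    (hgoodM : ∀ᵐ ω ∂P15, |Su ω - S0| ≤ M ∧ |Sl ω - S0| ≤ M ∧ 0 < Su ω - Sl ω)
    {f : ℝ → ℝ} (hf : f ∈ I15 Sl Su) (γ : ℝ) :
    Integrable (Gi3 S0 Sl Su U f γ) P15 := by
  apply ex3_integrable (ex3_Gmeas hSl_meas hSu_meas
    ((ex3_deriv_anti hU_conc hU_diff).measurable) hf.1 γ).aestronglyMeasurable
    (C := deriv U (-(1 + |γ| * M)) * M)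
  filter_upwards [hgoodM, hf.2] with ω hω h45
  exact ex3_Gpt hU_mono hU_conc hU_diff hω.1 hω.2.1 hω.2.2 h45.1 h45.2 (le_refl |γ|)

lemma ex3_ptderiv (hU_diff : Differentiable ℝ U) (f : ℝ → ℝ) (ω x : ℝ) :
    HasDerivAt (fun γ => Fi3 S0 Sl Su U f γ ω) (Gi3 S0 Sl Su U f x ω) x := by
  have d1 : HasDerivAt (fun γ : ℝ => 1 + γ * (Su ω - S0)) (Su ω - S0) x := by
    simpa using ((hasDerivAt_id x).mul_const (Su ω - S0)).const_add 1
  have d2 : HasDerivAt (fun γ : ℝ => 1 + γ * (Sl ω - S0)) (Sl ω - S0) x := by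
    simpa using ((hasDerivAt_id x).mul_const (Sl ω - S0)).const_add 1
  have e1 : HasDerivAt (fun γ : ℝ => U (1 + γ * (Su ω - S0)))
      (deriv U (1 + x * (Su ω - S0)) * (Su ω - S0)) x :=
    (hU_diff _).hasDerivAt.comp x d1
  have e2 : HasDerivAt (fun γ : ℝ => U (1 + γ * (Sl ω - S0)))
      (deriv U (1 + x * (Sl ω - S0)) * (Sl ω - S0)) x :=
    (hU_diff _).hasDerivAt.comp x d2
  exact (e1.mul_const _).add (e2.mul_const _)

lemma ex3_hasDeriv (hSl_meas : Measurable Sl) (hSu_meas : Measurable Su)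
    (hU_mono : StrictMono U) (hU_conc : ConcaveOn ℝ Set.univ U)
    (hU_diff : Differentiable ℝ U) (hM : 0 < M)
    (hgoodM : ∀ᵐ ω ∂P15, |Su ω - S0| ≤ M ∧ |Sl ω - S0| ≤ M ∧ 0 < Su ω - Sl ω)
    {f : ℝ → ℝ} (hf : f ∈ I15 Sl Su) (g : ℝ) :
    HasDerivAt (fun γ => ∫ ω, Fi3 S0 Sl Su U f γ ω ∂P15)
      (∫ ω, Gi3 S0 Sl Su U f g ω ∂P15) g := by
  have hKpos : 0 < deriv U (-(1 + (|g| + 1) * M)) * M :=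
    mul_pos (ex3_deriv_pos hU_mono hU_conc hU_diff _) hM
  have hlip : ∀ᵐ ω ∂P15, LipschitzOnWith (Real.nnabs (deriv U (-(1 + (|g| + 1) * M)) * M))
      (fun γ => Fi3 S0 Sl Su U f γ ω) (Metric.ball g 1) := by
    filter_upwards [hgoodM, hf.2] with ω hω h45
    apply (convex_ball g 1).lipschitzOnWith_of_nnnorm_hasDerivWithin_le
      (f' := fun x => Gi3 S0 Sl Su U f x ω)
      (fun x _ => (ex3_ptderiv hU_diff f ω x).hasDerivWithinAt)
    intro x hx
    have hxr : |x| ≤ |g| + 1 := by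
      have h6 := Metric.mem_ball.1 hx
      rw [Real.dist_eq] at h6
      have h7 := abs_sub_abs_le_abs_sub x g
      linarith
    rw [← NNReal.coe_le_coe, coe_nnnorm, Real.coe_nnabs, Real.norm_eq_abs, abs_of_pos hKpos]
    exact ex3_Gpt hU_mono hU_conc hU_diff hω.1 hω.2.1 hω.2.2 h45.1 h45.2 hxr
  exact (hasDerivAt_integral_of_dominated_loc_of_lip (F := fun γ ω => Fi3 S0 Sl Su U f γ ω)
    (F' := fun ω => Gi3 S0 Sl Su U f g ω) (bound := fun _ => deriv U (-(1 + (|g| + 1) * M)) * M)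
    (Metric.ball_mem_nhds g one_pos)
    (Filter.Eventually.of_forall fun x =>
      (ex3_Fmeas hSl_meas hSu_meas hU_diff.continuous.measurable hf.1 x).aestronglyMeasurable)
    (ex3_Fint hSl_meas hSu_meas hU_mono hU_diff.continuous hgoodM hf g)
    (ex3_Gmeas hSl_meas hSu_meas ((ex3_deriv_anti hU_conc hU_diff).measurable)
      hf.1 g).aestronglyMeasurable
    hlip (integrable_const _)
    (Filter.Eventually.of_forall fun ω => ex3_ptderiv hU_diff f ω g)).2

lemma ex3_tangent_int (hSl_meas : Measurable Sl) (hSu_meas : Measurable Su)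
    (hU_mono : StrictMono U) (hU_conc : ConcaveOn ℝ Set.univ U)
    (hU_diff : Differentiable ℝ U)
    (hgoodM : ∀ᵐ ω ∂P15, |Su ω - S0| ≤ M ∧ |Sl ω - S0| ≤ M ∧ 0 < Su ω - Sl ω)
    {f : ℝ → ℝ} (hf : f ∈ I15 Sl Su) (g γ : ℝ) :
    (∫ ω, Fi3 S0 Sl Su U f γ ω ∂P15) ≤ (∫ ω, Fi3 S0 Sl Su U f g ω ∂P15) +
      (γ - g) * ∫ ω, Gi3 S0 Sl Su U f g ω ∂P15 := by
  have hFγ := ex3_Fint hSl_meas hSu_meas hU_mono hU_diff.continuous hgoodM hf γ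
  have hFg := ex3_Fint hSl_meas hSu_meas hU_mono hU_diff.continuous hgoodM hf g
  have hGg := ex3_Gint hSl_meas hSu_meas hU_mono hU_conc hU_diff hgoodM hf g
  have key : ∀ᵐ ω ∂P15, Fi3 S0 Sl Su U f γ ω ≤
      Fi3 S0 Sl Su U f g ω + (γ - g) * Gi3 S0 Sl Su U f g ω := by
    filter_upwards [hgoodM, hf.2] with ω hω h45
    obtain ⟨hA, hB, hd⟩ := hω
    obtain ⟨h4, h5⟩ := h45
    obtain ⟨w0, -, v0, -, -, -⟩ := ex3_weights (S0 := S0) hd h4 h5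
    have t1 := ex3_tangent hU_conc hU_diff (1 + g * (Su ω - S0)) (1 + γ * (Su ω - S0))
    have t2 := ex3_tangent hU_conc hU_diff (1 + g * (Sl ω - S0)) (1 + γ * (Sl ω - S0))
    have e1 : 1 + γ * (Su ω - S0) - (1 + g * (Su ω - S0)) = (γ - g) * (Su ω - S0) := by ring
    have e2 : 1 + γ * (Sl ω - S0) - (1 + g * (Sl ω - S0)) = (γ - g) * (Sl ω - S0) := by ring
    rw [e1] at t1
    rw [e2] at t2
    simp only [Fi3, Gi3]
    nlinarith [mul_le_mul_of_nonneg_right t1 w0, mul_le_mul_of_nonneg_right t2 v0]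
  have hInt2 : Integrable (fun ω => Fi3 S0 Sl Su U f g ω + (γ - g) * Gi3 S0 Sl Su U f g ω) P15 :=
    hFg.add (hGg.const_mul (γ - g))
  have h1 := integral_mono_ae hFγ hInt2 key
  rwa [integral_add hFg (hGg.const_mul (γ - g)), integral_const_mul] at h1

end Machinery


set_option maxHeartbeats 1000000 in
/-- **Example 3 (saddle points).** If moreover `U` is strictly increasing and differentiable
and the problem `maximize E[U(X_1(γ))]` has an optimal solution, then `(S⋆, γ⋆)` is a saddle
point of `Ψ̂` iff (i) `S⋆_1 = S̲_1` a.s. on `{γ⋆_0 > 0}` and `S⋆_1 = S̄_1` a.s. on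
`{γ⋆_0 < 0}`, and (ii) `E[(S⋆_1 − S_0) U′(1 + γ⋆_0 (S⋆_1 − S_0))] = 0`. Consequently every
generalized shadow price is a shadow price. -/
theorem statement15
    (S0 : ℝ) (Sl Su : ℝ → ℝ)
    (hSl_meas : Measurable Sl) (hSu_meas : Measurable Su)
    (hSl_bdd : MemLp Sl ∞ P15) (hSu_bdd : MemLp Su ∞ P15)
    (hS_pos : ∀ᵐ ω ∂P15, 0 < Sl ω)
    (α : ℝ) (hα : 0 < α) (hgap : ∀ᵐ ω ∂P15, α ≤ Su ω - Sl ω)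
    (U : ℝ → ℝ) (hU_mono : StrictMono U) (hU_conc : ConcaveOn ℝ Set.univ U)
    (hU_diff : Differentiable ℝ U)
    (hopt : ∃ g : ℝ, ∀ γ0 : ℝ,
      ∫ ω, U (X1ex3 S0 Sl Su γ0 ω) ∂P15 ≤ ∫ ω, U (X1ex3 S0 Sl Su g ω) ∂P15) :
    (∀ Sstar ∈ I15 Sl Su, ∀ gstar : ℝ,
      ((∀ γ0 : ℝ, PsiHat3 S0 Sl Su U Sstar γ0 ≤ PsiHat3 S0 Sl Su U Sstar gstar) ∧
        (∀ f ∈ I15 Sl Su, PsiHat3 S0 Sl Su U Sstar gstar ≤ PsiHat3 S0 Sl Su U f gstar))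
      ↔ ((∀ᵐ ω ∂P15, (0 < gstar → Sstar ω = Sl ω) ∧ (gstar < 0 → Sstar ω = Su ω)) ∧
          ∫ ω, (Sstar ω - S0) * deriv U (1 + gstar * (Sstar ω - S0)) ∂P15 = 0)) ∧
    (∀ Sstar ∈ I15 Sl Su,
      (⨆ γ0 : ℝ, ((PsiHat3 S0 Sl Su U Sstar γ0 : ℝ) : EReal)) =
          (⨆ γ0 : ℝ, ((∫ ω, U (X1ex3 S0 Sl Su γ0 ω) ∂P15 : ℝ) : EReal)) →
      (⨆ γ0 : ℝ, ((∫ ω, U (1 + γ0 * (Sstar ω - S0)) ∂P15 : ℝ) : EReal)) =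
        ⨆ γ0 : ℝ, ((∫ ω, U (X1ex3 S0 Sl Su γ0 ω) ∂P15 : ℝ) : EReal)) := by
  obtain ⟨Cl, hCl0, hCl⟩ := ex3_ae_bound hSl_bdd
  obtain ⟨Cu, hCu0, hCu⟩ := ex3_ae_bound hSu_bdd
  set M : ℝ := Cl + Cu + |S0| + 1 with hMdef
  have hMpos : 0 < M := by rw [hMdef]; positivity
  have hgoodM : ∀ᵐ ω ∂P15, |Su ω - S0| ≤ M ∧ |Sl ω - S0| ≤ M ∧ 0 < Su ω - Sl ω := by
    filter_upwards [hCl, hCu, hgap] with ω h1 h2 h3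
    obtain ⟨a1, a2⟩ := abs_le.1 h1
    obtain ⟨b1, b2⟩ := abs_le.1 h2
    have c1 := le_abs_self S0
    have c2 := neg_abs_le S0
    refine ⟨abs_le.2 ⟨by rw [hMdef]; linarith, by rw [hMdef]; linarith⟩,
      abs_le.2 ⟨by rw [hMdef]; linarith, by rw [hMdef]; linarith⟩, by linarith⟩
  have hUc : Continuous U := hU_diff.continuous
  have hU'pos : ∀ x, 0 < deriv U x := ex3_deriv_pos hU_mono hU_conc hU_diff
  have hPF : ∀ (f : ℝ → ℝ) (γ : ℝ),
      PsiHat3 S0 Sl Su U f γ = ∫ ω, Fi3 S0 Sl Su U f γ ω ∂P15 := fun _ _ => rfl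
  have hFint : ∀ f : ℝ → ℝ, f ∈ I15 Sl Su → ∀ γ : ℝ, Integrable (Fi3 S0 Sl Su U f γ) P15 :=
    fun f hf γ => ex3_Fint hSl_meas hSu_meas hU_mono hUc hgoodM hf γ
  have hGint : ∀ f : ℝ → ℝ, f ∈ I15 Sl Su → ∀ γ : ℝ, Integrable (Gi3 S0 Sl Su U f γ) P15 :=
    fun f hf γ => ex3_Gint hSl_meas hSu_meas hU_mono hU_conc hU_diff hgoodM hf γ
  have hDerivP : ∀ f : ℝ → ℝ, f ∈ I15 Sl Su → ∀ g : ℝ,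
      HasDerivAt (fun γ => PsiHat3 S0 Sl Su U f γ) (∫ ω, Gi3 S0 Sl Su U f g ω ∂P15) g :=
    fun f hf g => ex3_hasDeriv hSl_meas hSu_meas hU_mono hU_conc hU_diff hMpos hgoodM hf g
  have hTang : ∀ f : ℝ → ℝ, f ∈ I15 Sl Su → ∀ g γ : ℝ,
      PsiHat3 S0 Sl Su U f γ ≤ PsiHat3 S0 Sl Su U f g +
        (γ - g) * ∫ ω, Gi3 S0 Sl Su U f g ω ∂P15 :=
    fun f hf g γ => ex3_tangent_int hSl_meas hSu_meas hU_mono hU_conc hU_diff hgoodM hf g γ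
  have hSlI : Sl ∈ I15 Sl Su := ⟨hSl_meas, hgap.mono fun ω h => ⟨le_refl _, by linarith⟩⟩
  have hSuI : Su ∈ I15 Sl Su := ⟨hSu_meas, hgap.mono fun ω h => ⟨by linarith, le_refl _⟩⟩
  have hX1pos : ∀ γ : ℝ, 0 ≤ γ → ∀ ω, X1ex3 S0 Sl Su γ ω = 1 + γ * (Sl ω - S0) := by
    intro γ hγ ω
    simp only [X1ex3, max_eq_left hγ, max_eq_right (neg_nonpos.2 hγ)]
    ring
  have hX1neg : ∀ γ : ℝ, γ ≤ 0 → ∀ ω, X1ex3 S0 Sl Su γ ω = 1 + γ * (Su ω - S0) := by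
    intro γ hγ ω
    simp only [X1ex3, max_eq_right hγ, max_eq_left (neg_nonneg.2 hγ)]
    ring
  have hXint : ∀ γ : ℝ, Integrable (fun ω => U (X1ex3 S0 Sl Su γ ω)) P15 := by
    intro γ
    have hmeas : Measurable (fun ω => X1ex3 S0 Sl Su γ ω) := by
      unfold X1ex3
      exact (measurable_const.add ((hSl_meas.sub measurable_const).const_mul (max γ 0))).sub
        ((hSu_meas.sub measurable_const).const_mul (max (-γ) 0))
    apply ex3_integrable (hUc.measurable.comp hmeas).aestronglyMeasurable
      (C := max |U (-(1 + 2 * |γ| * M))| |U (1 + 2 * |γ| * M)|)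
    filter_upwards [hgoodM] with ω hω
    obtain ⟨hA, hB, hd⟩ := hω
    apply ex3_absU hU_mono
    have e1 : |max γ 0| ≤ |γ| := by
      rw [abs_of_nonneg (le_max_right γ 0)]
      exact max_le (le_abs_self γ) (abs_nonneg γ)
    have e2 : |max (-γ) 0| ≤ |γ| := by
      rw [abs_of_nonneg (le_max_right (-γ) 0)]
      exact max_le (neg_le_abs γ) (abs_nonneg γ)
    have h8 : |max γ 0 * (Sl ω - S0)| ≤ |γ| * M := by
      rw [abs_mul]; exact mul_le_mul e1 hB (abs_nonneg _) (abs_nonneg γ)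
    have h9 : |max (-γ) 0 * (Su ω - S0)| ≤ |γ| * M := by
      rw [abs_mul]; exact mul_le_mul e2 hA (abs_nonneg _) (abs_nonneg γ)
    have h7 : |X1ex3 S0 Sl Su γ ω| ≤
        |1 + max γ 0 * (Sl ω - S0)| + |max (-γ) 0 * (Su ω - S0)| := by
      unfold X1ex3
      rw [sub_eq_add_neg]
      exact (abs_add_le _ _).trans (by rw [abs_neg])
    have h10 := abs_add_le 1 (max γ 0 * (Sl ω - S0))
    rw [abs_one] at h10
    linarith
  have hSabs : ∀ Sstar : ℝ → ℝ, Sstar ∈ I15 Sl Su → ∀ᵐ ω ∂P15, |Sstar ω - S0| ≤ M := by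
    intro Sstar hS
    filter_upwards [hgoodM, hS.2] with ω hω h45
    obtain ⟨hA, hB, -⟩ := hω
    obtain ⟨hA1, hA2⟩ := abs_le.1 hA
    obtain ⟨hB1, hB2⟩ := abs_le.1 hB
    exact abs_le.2 ⟨by linarith [h45.1], by linarith [h45.2]⟩
  have hPhiInt : ∀ Sstar : ℝ → ℝ, Sstar ∈ I15 Sl Su → ∀ γ : ℝ,
      Integrable (fun ω => U (1 + γ * (Sstar ω - S0))) P15 := by
    intro Sstar hS γ
    apply ex3_integrable ((hUc.measurable.comp
      (((hS.1.sub measurable_const).const_mul γ).const_add 1))).aestronglyMeasurable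
      (C := max |U (-(1 + |γ| * M))| |U (1 + |γ| * M)|)
    filter_upwards [hSabs Sstar hS] with ω hω
    apply ex3_absU hU_mono
    have h6 : |γ * (Sstar ω - S0)| ≤ |γ| * M := by
      rw [abs_mul]; exact mul_le_mul_of_nonneg_left hω (abs_nonneg γ)
    calc |1 + γ * (Sstar ω - S0)| ≤ |(1:ℝ)| + |γ * (Sstar ω - S0)| := abs_add_le 1 _
      _ ≤ 1 + |γ| * M := by rw [abs_one]; linarith
  have hSubInt : ∀ Sstar : ℝ → ℝ, Sstar ∈ I15 Sl Su →
      Integrable (fun ω => Sstar ω - S0) P15 := fun Sstar hS =>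
    ex3_integrable ((hS.1.sub measurable_const)).aestronglyMeasurable (hSabs Sstar hS)
  have hFX : ∀ Sstar : ℝ → ℝ, Sstar ∈ I15 Sl Su → ∀ γ : ℝ,
      ∀ᵐ ω ∂P15, U (X1ex3 S0 Sl Su γ ω) ≤ Fi3 S0 Sl Su U Sstar γ ω := by
    intro Sstar hS γ
    filter_upwards [hgoodM, hS.2] with ω hω h45
    obtain ⟨hA, hB, hd⟩ := hω
    obtain ⟨h4, h5⟩ := h45
    obtain ⟨w0, w1, v0, v1, hsum, -⟩ := ex3_weights (S0 := S0) hd h4 h5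
    simp only [Fi3]
    rcases le_or_gt 0 γ with hγ | hγ
    · rw [hX1pos γ hγ ω]
      have mono : U (1 + γ * (Sl ω - S0)) ≤ U (1 + γ * (Su ω - S0)) :=
        hU_mono.monotone (by nlinarith [mul_nonneg hγ hd.le])
      have key : U (1 + γ * (Sl ω - S0)) * ((Sstar ω - Sl ω) / (Su ω - Sl ω)) +
          U (1 + γ * (Sl ω - S0)) * ((Su ω - Sstar ω) / (Su ω - Sl ω)) =
          U (1 + γ * (Sl ω - S0)) := by rw [← mul_add, hsum, mul_one]
      have key2 := mul_le_mul_of_nonneg_right mono w0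
      linarith
    · rw [hX1neg γ hγ.le ω]
      have mono : U (1 + γ * (Su ω - S0)) ≤ U (1 + γ * (Sl ω - S0)) :=
        hU_mono.monotone (by nlinarith [mul_nonneg (neg_nonneg.2 hγ.le) hd.le])
      have key : U (1 + γ * (Su ω - S0)) * ((Sstar ω - Sl ω) / (Su ω - Sl ω)) +
          U (1 + γ * (Su ω - S0)) * ((Su ω - Sstar ω) / (Su ω - Sl ω)) =
          U (1 + γ * (Su ω - S0)) := by rw [← mul_add, hsum, mul_one]
      have key2 := mul_le_mul_of_nonneg_right mono v0
      linarith
  have hPhiX : ∀ Sstar : ℝ → ℝ, Sstar ∈ I15 Sl Su → ∀ γ : ℝ,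
      ∀ᵐ ω ∂P15, U (X1ex3 S0 Sl Su γ ω) ≤ U (1 + γ * (Sstar ω - S0)) := by
    intro Sstar hS γ
    filter_upwards [hS.2] with ω h45
    obtain ⟨h4, h5⟩ := h45
    rcases le_or_gt 0 γ with hγ | hγ
    · rw [hX1pos γ hγ ω]
      exact hU_mono.monotone
        (by linarith [mul_le_mul_of_nonneg_left (sub_le_sub_right h4 S0) hγ])
    · rw [hX1neg γ hγ.le ω]
      exact hU_mono.monotone
        (by linarith [mul_le_mul_of_nonpos_left (sub_le_sub_right h5 S0) hγ.le])
  have hGid : ∀ Sstar : ℝ → ℝ, Sstar ∈ I15 Sl Su → ∀ gs : ℝ,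
      (∀ᵐ ω ∂P15, (0 < gs → Sstar ω = Sl ω) ∧ (gs < 0 → Sstar ω = Su ω)) →
      ∀ᵐ ω ∂P15, Gi3 S0 Sl Su U Sstar gs ω =
        (Sstar ω - S0) * deriv U (1 + gs * (Sstar ω - S0)) := by
    intro Sstar hS gs hi
    filter_upwards [hgoodM, hS.2, hi] with ω hω h45 hio
    obtain ⟨hA, hB, hd⟩ := hω
    obtain ⟨h4, h5⟩ := h45
    obtain ⟨hip, hin⟩ := hio
    obtain ⟨w0, w1, v0, v1, hsum, hid⟩ := ex3_weights (S0 := S0) hd h4 h5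
    rcases lt_trichotomy gs 0 with hg | hg | hg
    · simp only [Gi3]
      rw [hin hg, div_self hd.ne', sub_self, zero_div]
      ring
    · subst hg
      simp only [Gi3, zero_mul, add_zero]
      linear_combination deriv U 1 * hid
    · simp only [Gi3]
      rw [hip hg, sub_self, zero_div, div_self hd.ne']
      ring
  constructor
  · intro Sstar hS gstar
    constructor
    · rintro ⟨ha, hb⟩
      have hi : ∀ᵐ ω ∂P15, (0 < gstar → Sstar ω = Sl ω) ∧ (gstar < 0 → Sstar ω = Su ω) := by
        rcases lt_trichotomy gstar 0 with hg | hg | hg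
        · have e : ∀ᵐ ω ∂P15, Fi3 S0 Sl Su U Sstar gstar ω - Fi3 S0 Sl Su U Su gstar ω =
              (U (1 + gstar * (Sl ω - S0)) - U (1 + gstar * (Su ω - S0))) *
                ((Su ω - Sstar ω) / (Su ω - Sl ω)) := by
            filter_upwards [hgoodM] with ω hω
            obtain ⟨-, -, hd⟩ := hω
            simp only [Fi3]
            field_simp
            ring
          have hnn : ∀ᵐ ω ∂P15,
              0 ≤ Fi3 S0 Sl Su U Sstar gstar ω - Fi3 S0 Sl Su U Su gstar ω := by
            filter_upwards [e, hgoodM, hS.2] with ω he hω h45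
            obtain ⟨hA, hB, hd⟩ := hω
            rw [he]
            apply mul_nonneg
            · refine sub_nonneg.2 (hU_mono.monotone ?_)
              nlinarith [mul_nonneg (neg_nonneg.2 hg.le) hd.le]
            · exact div_nonneg (by linarith [h45.2]) hd.le
          have hz : ∫ ω, (Fi3 S0 Sl Su U Sstar gstar ω - Fi3 S0 Sl Su U Su gstar ω) ∂P15
              = 0 := by
            refine le_antisymm ?_ (integral_nonneg_of_ae hnn)
            rw [integral_sub (hFint Sstar hS gstar) (hFint Su hSuI gstar)]
            have h6 := hb Su hSuI
            rw [hPF Sstar gstar, hPF Su gstar] at h6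
            linarith
          have hae0 := (integral_eq_zero_iff_of_nonneg_ae hnn
            ((hFint Sstar hS gstar).sub (hFint Su hSuI gstar))).1 hz
          filter_upwards [e, hae0, hgoodM] with ω he h0 hω
          obtain ⟨hA, hB, hd⟩ := hω
          refine ⟨fun h => absurd (h.trans hg) (lt_irrefl 0), fun _ => ?_⟩
          simp only [Pi.zero_apply] at h0
          rw [he] at h0
          have hlt : U (1 + gstar * (Su ω - S0)) < U (1 + gstar * (Sl ω - S0)) :=
            hU_mono (by nlinarith [mul_pos (neg_pos.2 hg) hd])
          rcases mul_eq_zero.1 h0 with h | h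
          · linarith
          · rcases div_eq_zero_iff.1 h with h | h
            · linarith
            · exact absurd h hd.ne'
        · subst hg
          exact Filter.Eventually.of_forall fun ω =>
            ⟨fun h => absurd h (lt_irrefl 0), fun h => absurd h (lt_irrefl 0)⟩
        · have e : ∀ᵐ ω ∂P15, Fi3 S0 Sl Su U Sstar gstar ω - Fi3 S0 Sl Su U Sl gstar ω =
              (U (1 + gstar * (Su ω - S0)) - U (1 + gstar * (Sl ω - S0))) *
                ((Sstar ω - Sl ω) / (Su ω - Sl ω)) := by
            filter_upwards [hgoodM] with ω hω
            obtain ⟨-, -, hd⟩ := hω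
            simp only [Fi3]
            field_simp
            ring
          have hnn : ∀ᵐ ω ∂P15,
              0 ≤ Fi3 S0 Sl Su U Sstar gstar ω - Fi3 S0 Sl Su U Sl gstar ω := by
            filter_upwards [e, hgoodM, hS.2] with ω he hω h45
            obtain ⟨hA, hB, hd⟩ := hω
            rw [he]
            apply mul_nonneg
            · refine sub_nonneg.2 (hU_mono.monotone ?_)
              nlinarith [mul_nonneg hg.le hd.le]
            · exact div_nonneg (by linarith [h45.1]) hd.le
          have hz : ∫ ω, (Fi3 S0 Sl Su U Sstar gstar ω - Fi3 S0 Sl Su U Sl gstar ω) ∂P15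
              = 0 := by
            refine le_antisymm ?_ (integral_nonneg_of_ae hnn)
            rw [integral_sub (hFint Sstar hS gstar) (hFint Sl hSlI gstar)]
            have h6 := hb Sl hSlI
            rw [hPF Sstar gstar, hPF Sl gstar] at h6
            linarith
          have hae0 := (integral_eq_zero_iff_of_nonneg_ae hnn
            ((hFint Sstar hS gstar).sub (hFint Sl hSlI gstar))).1 hz
          filter_upwards [e, hae0, hgoodM] with ω he h0 hω
          obtain ⟨hA, hB, hd⟩ := hω
          refine ⟨fun _ => ?_, fun h => absurd (hg.trans h) (lt_irrefl 0)⟩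
          simp only [Pi.zero_apply] at h0
          rw [he] at h0
          have hlt : U (1 + gstar * (Sl ω - S0)) < U (1 + gstar * (Su ω - S0)) :=
            hU_mono (by nlinarith [mul_pos hg hd])
          rcases mul_eq_zero.1 h0 with h | h
          · linarith
          · rcases div_eq_zero_iff.1 h with h | h
            · linarith
            · exact absurd h hd.ne'
      refine ⟨hi, ?_⟩
      have hmax : IsLocalMax (fun γ => PsiHat3 S0 Sl Su U Sstar γ) gstar :=
        Filter.Eventually.of_forall ha
      have hz := hmax.hasDerivAt_eq_zero (hDerivP Sstar hS gstar)
      calc ∫ ω, (Sstar ω - S0) * deriv U (1 + gstar * (Sstar ω - S0)) ∂P15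
          = ∫ ω, Gi3 S0 Sl Su U Sstar gstar ω ∂P15 :=
            integral_congr_ae ((hGid Sstar hS gstar hi).mono fun ω h => h.symm)
        _ = 0 := hz
    · rintro ⟨hi, hii⟩
      have hG0 : ∫ ω, Gi3 S0 Sl Su U Sstar gstar ω ∂P15 = 0 := by
        rw [integral_congr_ae (hGid Sstar hS gstar hi)]
        exact hii
      constructor
      · intro γ
        have ht := hTang Sstar hS gstar γ
        rw [hG0, mul_zero, add_zero] at ht
        exact ht
      · intro f hf
        rw [hPF Sstar gstar, hPF f gstar]
        apply integral_mono_ae (hFint Sstar hS gstar) (hFint f hf gstar)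
        filter_upwards [hgoodM, hS.2, hf.2, hi] with ω hω h45 h67 hio
        obtain ⟨hA, hB, hd⟩ := hω
        obtain ⟨h4, h5⟩ := h45
        obtain ⟨h6, h7⟩ := h67
        obtain ⟨hip, hin⟩ := hio
        rw [← sub_nonneg]
        have e : Fi3 S0 Sl Su U f gstar ω - Fi3 S0 Sl Su U Sstar gstar ω =
            (U (1 + gstar * (Su ω - S0)) - U (1 + gstar * (Sl ω - S0))) *
              ((f ω - Sstar ω) / (Su ω - Sl ω)) := by
          simp only [Fi3]
          field_simp
          ring
        rw [e]
        rcases lt_trichotomy gstar 0 with hg | hg | hg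
        · rw [hin hg]
          have mono : U (1 + gstar * (Su ω - S0)) ≤ U (1 + gstar * (Sl ω - S0)) :=
            hU_mono.monotone (by nlinarith [mul_nonneg (neg_nonneg.2 hg.le) hd.le])
          have hpos2 : 0 ≤ (Su ω - f ω) / (Su ω - Sl ω) := div_nonneg (by linarith) hd.le
          calc (0:ℝ) ≤ (U (1 + gstar * (Sl ω - S0)) - U (1 + gstar * (Su ω - S0))) *
              ((Su ω - f ω) / (Su ω - Sl ω)) := mul_nonneg (by linarith) hpos2
            _ = (U (1 + gstar * (Su ω - S0)) - U (1 + gstar * (Sl ω - S0))) *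
              ((f ω - Su ω) / (Su ω - Sl ω)) := by ring
        · subst hg
          simp only [zero_mul, add_zero, sub_self, le_refl]
        · rw [hip hg]
          have mono : U (1 + gstar * (Sl ω - S0)) ≤ U (1 + gstar * (Su ω - S0)) :=
            hU_mono.monotone (by nlinarith [mul_nonneg hg.le hd.le])
          exact mul_nonneg (by linarith) (div_nonneg (by linarith) hd.le)
  · intro Sstar hS hsup
    obtain ⟨g, hg⟩ := hopt
    have hlam : (⨆ γ0 : ℝ, ((∫ ω, U (X1ex3 S0 Sl Su γ0 ω) ∂P15 : ℝ) : EReal)) =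
        ((∫ ω, U (X1ex3 S0 Sl Su g ω) ∂P15 : ℝ) : EReal) :=
      le_antisymm (iSup_le fun γ => EReal.coe_le_coe_iff.2 (hg γ))
        (le_iSup (fun γ0 : ℝ => ((∫ ω, U (X1ex3 S0 Sl Su γ0 ω) ∂P15 : ℝ) : EReal)) g)
    have hub : ∀ γ : ℝ, PsiHat3 S0 Sl Su U Sstar γ ≤ ∫ ω, U (X1ex3 S0 Sl Su g ω) ∂P15 := by
      intro γ
      have h1 : ((PsiHat3 S0 Sl Su U Sstar γ : ℝ) : EReal) ≤
          ⨆ γ0 : ℝ, ((PsiHat3 S0 Sl Su U Sstar γ0 : ℝ) : EReal) :=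
        le_iSup (fun γ0 : ℝ => ((PsiHat3 S0 Sl Su U Sstar γ0 : ℝ) : EReal)) γ
      rw [hsup, hlam] at h1
      exact EReal.coe_le_coe_iff.1 h1
    have hlb : ∀ γ : ℝ, (∫ ω, U (X1ex3 S0 Sl Su γ ω) ∂P15) ≤ PsiHat3 S0 Sl Su U Sstar γ := by
      intro γ
      rw [hPF Sstar γ]
      exact integral_mono_ae (hXint γ) (hFint Sstar hS γ) (hFX Sstar hS γ)
    have hae : ∀ᵐ ω ∂P15, Fi3 S0 Sl Su U Sstar g ω = U (X1ex3 S0 Sl Su g ω) := by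
      have hnn : ∀ᵐ ω ∂P15, 0 ≤ Fi3 S0 Sl Su U Sstar g ω - U (X1ex3 S0 Sl Su g ω) :=
        (hFX Sstar hS g).mono fun ω h => by linarith
      have hint := (hFint Sstar hS g).sub (hXint g)
      have h0 : ∫ ω, (Fi3 S0 Sl Su U Sstar g ω - U (X1ex3 S0 Sl Su g ω)) ∂P15 = 0 := by
        rw [integral_sub (hFint Sstar hS g) (hXint g)]
        have h6 := hub g
        have h7 := hlb g
        rw [hPF Sstar g] at h6 h7
        linarith
      have h8 := (integral_eq_zero_iff_of_nonneg_ae hnn hint).1 h0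
      filter_upwards [h8] with ω h9
      simp only [Pi.zero_apply] at h9
      linarith
    rw [hlam]
    have hphile : ∀ γ : ℝ, (∫ ω, U (1 + γ * (Sstar ω - S0)) ∂P15) ≤
        ∫ ω, U (X1ex3 S0 Sl Su g ω) ∂P15 := by
      rcases lt_trichotomy g 0 with hgneg | hg0 | hgpos
      · have hSS : ∀ᵐ ω ∂P15, Sstar ω = Su ω := by
          filter_upwards [hae, hgoodM, hS.2] with ω he hω h45
          obtain ⟨hA, hB, hd⟩ := hω
          obtain ⟨h4, h5⟩ := h45
          obtain ⟨w0, w1, v0, v1, hsum, -⟩ := ex3_weights (S0 := S0) hd h4 h5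
          rw [hX1neg g hgneg.le ω] at he
          simp only [Fi3] at he
          have hlt : U (1 + g * (Su ω - S0)) < U (1 + g * (Sl ω - S0)) :=
            hU_mono (by nlinarith [mul_pos (neg_pos.2 hgneg) hd])
          have h9 : (U (1 + g * (Sl ω - S0)) - U (1 + g * (Su ω - S0))) *
              ((Su ω - Sstar ω) / (Su ω - Sl ω)) = 0 := by
            linear_combination he - U (1 + g * (Su ω - S0)) * hsum
          rcases mul_eq_zero.1 h9 with h | h
          · linarith
          · rcases div_eq_zero_iff.1 h with h | h
            · linarith
            · exact absurd h hd.ne'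
        intro γ
        have heq2 : (∫ ω, U (1 + γ * (Sstar ω - S0)) ∂P15) = PsiHat3 S0 Sl Su U Sstar γ := by
          rw [hPF Sstar γ]
          apply integral_congr_ae
          filter_upwards [hSS, hgoodM] with ω hss hω
          obtain ⟨-, -, hd⟩ := hω
          simp only [Fi3]
          rw [hss, div_self hd.ne', sub_self, zero_div]
          ring
        rw [heq2]
        exact hub γ
      · subst hg0
        have hpsi0 : (∫ ω, U (X1ex3 S0 Sl Su 0 ω) ∂P15) = U 1 := by
          have h1 : ∀ ω : ℝ, U (X1ex3 S0 Sl Su 0 ω) = U 1 := fun ω => by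
            rw [hX1pos 0 le_rfl ω]; norm_num
          simp only [h1]
          simp
        have hP0 : PsiHat3 S0 Sl Su U Sstar 0 = U 1 := by
          rw [hPF Sstar 0]
          have h1 : ∀ᵐ ω ∂P15, Fi3 S0 Sl Su U Sstar 0 ω = U 1 := by
            filter_upwards [hgoodM, hS.2] with ω hω h45
            obtain ⟨-, -, hd⟩ := hω
            obtain ⟨-, -, -, -, hsum, -⟩ := ex3_weights (S0 := S0) hd h45.1 h45.2
            simp only [Fi3, zero_mul, add_zero]
            linear_combination U 1 * hsum
          rw [integral_congr_ae h1]
          simp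
        have hmax : IsLocalMax (fun γ => PsiHat3 S0 Sl Su U Sstar γ) 0 :=
          Filter.Eventually.of_forall fun γ =>
            le_trans (hub γ) (le_of_eq (hpsi0.trans hP0.symm))
        have hz := hmax.hasDerivAt_eq_zero (hDerivP Sstar hS 0)
        have hColl : ∀ᵐ ω ∂P15, Gi3 S0 Sl Su U Sstar 0 ω = deriv U 1 * (Sstar ω - S0) := by
          filter_upwards [hgoodM, hS.2] with ω hω h45
          obtain ⟨-, -, hd⟩ := hω
          obtain ⟨-, -, -, -, -, hid⟩ := ex3_weights (S0 := S0) hd h45.1 h45.2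
          simp only [Gi3, zero_mul, add_zero]
          linear_combination deriv U 1 * hid
        rw [integral_congr_ae hColl, integral_const_mul] at hz
        have hI : ∫ ω, (Sstar ω - S0) ∂P15 = 0 :=
          (mul_eq_zero.1 hz).resolve_left (ne_of_gt (hU'pos 1))
        intro γ
        have hIntRHS : Integrable (fun ω => U 1 + deriv U 1 * γ * (Sstar ω - S0)) P15 :=
          (integrable_const (U 1)).add ((hSubInt Sstar hS).const_mul (deriv U 1 * γ))
        calc (∫ ω, U (1 + γ * (Sstar ω - S0)) ∂P15)
            ≤ ∫ ω, (U 1 + deriv U 1 * γ * (Sstar ω - S0)) ∂P15 := by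
              apply integral_mono_ae (hPhiInt Sstar hS γ) hIntRHS
              apply Filter.Eventually.of_forall
              intro ω
              have ht := ex3_tangent hU_conc hU_diff 1 (1 + γ * (Sstar ω - S0))
              have e : 1 + γ * (Sstar ω - S0) - 1 = γ * (Sstar ω - S0) := by ring
              rw [e] at ht
              show U (1 + γ * (Sstar ω - S0)) ≤ U 1 + deriv U 1 * γ * (Sstar ω - S0)
              have e2 : deriv U 1 * γ * (Sstar ω - S0) =
                  deriv U 1 * (γ * (Sstar ω - S0)) := by ring
              rw [e2]
              exact ht
          _ = U 1 + deriv U 1 * γ * ∫ ω, (Sstar ω - S0) ∂P15 := by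
              rw [integral_add (integrable_const (U 1))
                ((hSubInt Sstar hS).const_mul (deriv U 1 * γ)), integral_const_mul,
                integral_const]
              simp
          _ = U 1 := by rw [hI, mul_zero, add_zero]
          _ = ∫ ω, U (X1ex3 S0 Sl Su 0 ω) ∂P15 := hpsi0.symm
      · have hSS : ∀ᵐ ω ∂P15, Sstar ω = Sl ω := by
          filter_upwards [hae, hgoodM, hS.2] with ω he hω h45
          obtain ⟨hA, hB, hd⟩ := hω
          obtain ⟨h4, h5⟩ := h45
          obtain ⟨w0, w1, v0, v1, hsum, -⟩ := ex3_weights (S0 := S0) hd h4 h5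
          rw [hX1pos g hgpos.le ω] at he
          simp only [Fi3] at he
          have hlt : U (1 + g * (Sl ω - S0)) < U (1 + g * (Su ω - S0)) :=
            hU_mono (by nlinarith [mul_pos hgpos hd])
          have h9 : (U (1 + g * (Su ω - S0)) - U (1 + g * (Sl ω - S0))) *
              ((Sstar ω - Sl ω) / (Su ω - Sl ω)) = 0 := by
            linear_combination he - U (1 + g * (Sl ω - S0)) * hsum
          rcases mul_eq_zero.1 h9 with h | h
          · linarith
          · rcases div_eq_zero_iff.1 h with h | h
            · linarith
            · exact absurd h hd.ne'
        intro γ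
        have heq2 : (∫ ω, U (1 + γ * (Sstar ω - S0)) ∂P15) = PsiHat3 S0 Sl Su U Sstar γ := by
          rw [hPF Sstar γ]
          apply integral_congr_ae
          filter_upwards [hSS, hgoodM] with ω hss hω
          obtain ⟨-, -, hd⟩ := hω
          simp only [Fi3]
          rw [hss, sub_self, zero_div, div_self hd.ne']
          ring
        rw [heq2]
        exact hub γ
    refine le_antisymm (iSup_le fun γ => EReal.coe_le_coe_iff.2 (hphile γ)) ?_
    exact le_trans (EReal.coe_le_coe_iff.2 (integral_mono_ae (hXint g) (hPhiInt Sstar hS g)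
      (hPhiX Sstar hS g)))
      (le_iSup (fun γ0 : ℝ => ((∫ ω, U (1 + γ0 * (Sstar ω - S0)) ∂P15 : ℝ) : EReal)) g)

end
end
end
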